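/- arXiv:math/0310137 — 5 statements merged into one kernel-verified Lean document; each statement's English description precedes it below -/
import Mathlib

section
/- Let k be an algebraically closed field of characteristic p > 0 and let G₀ be a nontrivial finite p-subgroup of Aut_k(k[[x]]), with higher ramification groups G_i := {σ ∈ G₀ : ν_x(σ(x) − x) ≥ i+1} and ramification jumps m_0 < m_1 < ... < m_{n−1} (the integers j with G_j ≠ G_{j+1}). Then for every j ∈ {1, ..., n−1} one has m_j ≡ m_0 (mod p). -/
open PowerSeries
open Finset

/-- The `i`-th higher ramification set of a subgroup `G₀` of `Aut_k(k[[x]])`: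
the automorphisms `σ ∈ G₀` with `ν_x(σ(x) - x) ≥ i + 1`. -/
def ramificationSet {k : Type*} [Field k]
    (G₀ : Subgroup (PowerSeries k ≃ₐ[k] PowerSeries k)) (i : ℕ) :
    Set (PowerSeries k ≃ₐ[k] PowerSeries k) :=
  {σ | σ ∈ G₀ ∧ ((i : ℕ∞) + 1) ≤ (σ X - X).order}

/-- The ramification jumps of `G₀`, i.e. the integers `j` with `G_j ≠ G_{j+1}`. -/
def ramificationJumps {k : Type*} [Field k]
    (G₀ : Subgroup (PowerSeries k ≃ₐ[k] PowerSeries k)) : Set ℕ :=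
  {j : ℕ | ramificationSet G₀ j ≠ ramificationSet G₀ (j + 1)}

namespace RamAux
variable {k : Type*} [Field k]
lemma coeff_mul_vanish {g h : PowerSeries k} {r s : ℕ}
    (hg : ∀ N < r, coeff N g = 0) (hh : ∀ N < s, coeff N h = 0) :
    ∀ N < r + s, coeff N (g * h) = 0 := by
  intro N hN
  rw [coeff_mul]
  apply Finset.sum_eq_zero
  rintro ⟨i, j⟩ hij
  rw [Finset.HasAntidiagonal.mem_antidiagonal] at hij
  rcases lt_or_ge i r with h1 | h1
  · simp [hg i h1]
  · have : j < s := by omega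
    simp [hh j this]

lemma coeff_pow_vanish {g : PowerSeries k} {s : ℕ}
    (hg : ∀ N < s, coeff N g = 0) (j : ℕ) :
    ∀ N < j * s, coeff N (g ^ j) = 0 := by
  induction j with
  | zero => intro N hN; omega
  | succ j ih =>
    intro N hN
    rw [pow_succ]
    exact coeff_mul_vanish ih hg N (by rw [Nat.succ_mul] at hN; omega)

-- coefficients of (X+A)^m − X^m
lemma coeff_pow_add_sub {A : PowerSeries k} {a : ℕ} (ha : 1 ≤ a)
    (hA : ∀ N < a + 1, coeff N A = 0) (m : ℕ) :
    (∀ N < m + a, coeff N ((X + A) ^ m - (X : PowerSeries k) ^ m) = 0) ∧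
      coeff (m + a) ((X + A) ^ m - (X : PowerSeries k) ^ m)
        = (m : k) * coeff (a + 1) A := by
  classical
  have hXv : ∀ (i : ℕ), ∀ N < i, coeff N ((X : PowerSeries k) ^ i) = 0 := by
    intro i N hN
    rw [coeff_X_pow, if_neg (by omega)]
  have hbin : (X + A) ^ m - (X : PowerSeries k) ^ m
      = ∑ i ∈ Finset.range m, X ^ i * A ^ (m - i) * (m.choose i : PowerSeries k) := by
    rw [add_pow, Finset.sum_range_succ]
    simp [Nat.choose_self]
  -- each term with i ≤ m-2 vanishes below m + 2a ≥ m + a + 1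
  have hterm : ∀ i ∈ Finset.range m, i ≠ m - 1 →
      ∀ N < m + a + 1, coeff N (X ^ i * A ^ (m - i) * (m.choose i : PowerSeries k)) = 0 := by
    intro i hi hne N hN
    rw [Finset.mem_range] at hi
    have h2 : 2 ≤ m - i := by omega
    have hApow : ∀ N < (m - i) * (a + 1), coeff N (A ^ (m - i)) = 0 :=
      coeff_pow_vanish hA (m - i)
    have hmul : ∀ N < i + (m - i) * (a + 1),
        coeff N ((X : PowerSeries k) ^ i * A ^ (m - i)) = 0 :=
      coeff_mul_vanish (hXv i) hApow
    have hbound : m + a + 1 ≤ i + (m - i) * (a + 1) := by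
      have h3 : (m - i) * (a + 1) = (m - i) * a + (m - i) := by ring
      have h4 : 2 * a ≤ (m - i) * a := Nat.mul_le_mul_right a h2
      omega
    have : coeff N ((X : PowerSeries k) ^ i * A ^ (m - i)) = 0 := hmul N (by omega)
    rw [show ((m.choose i : PowerSeries k)) = C ((m.choose i : k)) by
          rw [← map_natCast (C (R := k))],
        coeff_mul_C, this, zero_mul]
  rcases Nat.eq_zero_or_pos m with rfl | hm
  · constructor
    · intro N hN; simp
    · simp
  -- main term i = m-1
  have hmain : ∀ N ≤ m + a, coeff N (X ^ (m-1) * A * (m.choose (m-1) : PowerSeries k))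
      = if N = m + a then (m : k) * coeff (a + 1) A else 0 := by
    intro N hN
    have hch : (m.choose (m - 1)) = m := by
      rw [← Nat.choose_symm (by omega : m - 1 ≤ m)]
      simp [Nat.sub_sub_self (by omega : 1 ≤ m)]
    rw [show ((m.choose (m-1) : PowerSeries k)) = C ((m.choose (m-1) : k)) by
          rw [← map_natCast (C (R := k))], coeff_mul_C, hch]
    rcases eq_or_lt_of_le hN with rfl | hlt
    · rw [if_pos rfl]
      have : m + a = (a + 1) + (m - 1) := by omega
      rw [this, coeff_X_pow_mul]
      ring
    · rw [if_neg (by omega)]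
      have := coeff_mul_vanish (hXv (m-1)) hA N (by omega)
      rw [this, zero_mul]
  have hsplit : (X + A) ^ m - (X : PowerSeries k) ^ m
      = (∑ i ∈ (Finset.range m).erase (m-1), X ^ i * A ^ (m - i) * (m.choose i : PowerSeries k))
        + X ^ (m-1) * A ^ (m - (m-1)) * (m.choose (m-1) : PowerSeries k) := by
    rw [hbin, Finset.sum_erase_add _ _ (Finset.mem_range.mpr (by omega))]
  have hmm : m - (m - 1) = 1 := by omega
  rw [hmm, pow_one] at hsplit
  have herase : ∀ N < m + a + 1, coeff N
      (∑ i ∈ (Finset.range m).erase (m-1), X ^ i * A ^ (m - i) * (m.choose i : PowerSeries k))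
      = 0 := by
    intro N hN
    rw [map_sum]
    refine Finset.sum_eq_zero fun i hi => ?_
    rw [Finset.mem_erase] at hi
    exact hterm i hi.2 hi.1 N hN
  constructor
  · intro N hN
    rw [hsplit, map_add, herase N (by omega), zero_add, hmain N (by omega), if_neg (by omega)]
  · rw [hsplit, map_add, herase (m+a) (by omega), zero_add, hmain (m+a) le_rfl, if_pos rfl]

lemma constantCoeff_apply_X (σ : PowerSeries k ≃ₐ[k] PowerSeries k) :
    constantCoeff (σ X) = 0 := by
  by_contra h
  have hu : IsUnit (σ X) := isUnit_iff_constantCoeff.mpr (isUnit_iff_ne_zero.mpr h)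
  have hX : IsUnit (X : PowerSeries k) := by
    have := hu.map σ.symm
    simpa using this
  have := isUnit_constantCoeff _ hX
  simp [constantCoeff_X] at this

lemma coeff_algEquiv_apply (σ : PowerSeries k ≃ₐ[k] PowerSeries k) (f : PowerSeries k) (N : ℕ) :
    coeff N (σ f) = ∑ m ∈ Finset.range (N + 1), coeff m f * coeff N ((σ X) ^ m) := by
  classical
  set S : PowerSeries k := ∑ m ∈ Finset.range (N + 1), coeff m f • (X : PowerSeries k) ^ m
    with hS
  have hdvd : (X : PowerSeries k) ^ (N + 1) ∣ f - S := by
    rw [X_pow_dvd_iff]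
    intro m hm
    have hcS : coeff m S = coeff m f := by
      rw [hS, map_sum]
      rw [Finset.sum_eq_single m]
      · rw [coeff_smul, coeff_X_pow, if_pos rfl, smul_eq_mul, mul_one]
      · intro b _ hb
        rw [coeff_smul, coeff_X_pow, if_neg (fun hh => hb hh.symm), smul_eq_mul, mul_zero]
      · intro hm'
        exact absurd (Finset.mem_range.mpr hm) hm'
    rw [map_sub, hcS, sub_self]
  obtain ⟨g, hg⟩ := hdvd
  have hf : f = S + X ^ (N + 1) * g := by rw [← hg]; ring
  have h2 : coeff N (σ (X ^ (N + 1) * g)) = 0 := by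
    have hdvd2 : (X : PowerSeries k) ^ (N + 1) ∣ σ (X ^ (N + 1) * g) := by
      rw [map_mul, map_pow]
      exact dvd_mul_of_dvd_left
        (pow_dvd_pow_of_dvd (X_dvd_iff.mpr (constantCoeff_apply_X σ)) _) _
    exact X_pow_dvd_iff.mp hdvd2 N (Nat.lt_succ_self N)
  have h1 : coeff N (σ S) = ∑ m ∈ Finset.range (N + 1), coeff m f * coeff N ((σ X) ^ m) := by
    rw [hS, map_sum, map_sum]
    refine Finset.sum_congr rfl fun m _ => ?_
    rw [map_smul, map_pow, coeff_smul, smul_eq_mul]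
  calc coeff N (σ f) = coeff N (σ S) + coeff N (σ (X ^ (N + 1) * g)) := by
        rw [← map_add, ← map_add, ← hf]
    _ = _ := by rw [h1, h2, add_zero]

lemma coeff_single_sum (c : ℕ → k) (N : ℕ) :
    ∑ m ∈ Finset.range (N + 1), c m * coeff N ((X : PowerSeries k) ^ m) = c N := by
  rw [Finset.sum_eq_single N]
  · rw [coeff_X_pow, if_pos rfl, mul_one]
  · intro b _ hb
    rw [coeff_X_pow, if_neg (fun hh => hb hh.symm), mul_zero]
  · intro hm'
    exact absurd (Finset.mem_range.mpr (Nat.lt_succ_self N)) hm'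

lemma algEquiv_eq_one_of_X (σ : PowerSeries k ≃ₐ[k] PowerSeries k) (h : σ X = X) : σ = 1 := by
  refine AlgEquiv.ext fun f => ?_
  refine PowerSeries.ext fun N => ?_
  rw [coeff_algEquiv_apply, h, coeff_single_sum]
  rfl


lemma coeff_sub_formula (φ ψ : PowerSeries k ≃ₐ[k] PowerSeries k) (f : PowerSeries k) (N : ℕ) :
    coeff N (φ f - ψ f)
      = ∑ m ∈ Finset.range (N + 1), coeff m f * coeff N ((φ X) ^ m - (ψ X) ^ m) := by
  rw [map_sub, coeff_algEquiv_apply, coeff_algEquiv_apply, ← Finset.sum_sub_distrib]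
  refine Finset.sum_congr rfl fun m _ => ?_
  rw [map_sub, mul_sub]

/-- Lemma B: if `φ X - ψ X` vanishes below `r` and `f` vanishes below `n'+1`,
then `φ f - ψ f` vanishes below `r + n'`. -/
lemma coeff_sub_apply_vanish (φ ψ : PowerSeries k ≃ₐ[k] PowerSeries k) {r : ℕ}
    (h : ∀ N < r, coeff N (φ X - ψ X) = 0) {f : PowerSeries k} {n' : ℕ}
    (hf : ∀ m < n' + 1, coeff m f = 0) :
    ∀ N < r + n', coeff N (φ f - ψ f) = 0 := by
  intro N hN
  rw [coeff_sub_formula]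
  refine Finset.sum_eq_zero fun m hm => ?_
  rcases lt_or_ge m (n' + 1) with h1 | h1
  · rw [hf m h1, zero_mul]
  · -- m ≥ n' + 1 ≥ 1
    have hfac : (φ X) ^ m - (ψ X) ^ m
        = (∑ i ∈ Finset.range m, (φ X) ^ i * (ψ X) ^ (m - 1 - i)) * (φ X - ψ X) :=
      (geom_sum₂_mul _ _ m).symm
    have hX1 : ∀ (χ : PowerSeries k ≃ₐ[k] PowerSeries k), ∀ N < 1, coeff N (χ X) = 0 := by
      intro χ N hN
      interval_cases N
      rw [coeff_zero_eq_constantCoeff_apply, constantCoeff_apply_X]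
    have hsum : ∀ N < m - 1, coeff N
        (∑ i ∈ Finset.range m, (φ X) ^ i * (ψ X) ^ (m - 1 - i)) = 0 := by
      intro N hN
      rw [map_sum]
      refine Finset.sum_eq_zero fun i hi => ?_
      rw [Finset.mem_range] at hi
      have h1 := coeff_pow_vanish (hX1 φ) i
      have h2 := coeff_pow_vanish (hX1 ψ) (m - 1 - i)
      simp only [mul_one] at h1 h2
      exact coeff_mul_vanish h1 h2 N (by omega)
    have := coeff_mul_vanish hsum h N (by omega)
    rw [hfac, this, mul_zero]

/-- Lemma D: leading behavior of `σ f - f`. -/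
lemma coeff_apply_sub_self (σ : PowerSeries k ≃ₐ[k] PowerSeries k) {a : ℕ} (ha : 1 ≤ a)
    (hA : ∀ N < a + 1, coeff N (σ X - X) = 0) {f : PowerSeries k} {nn : ℕ}
    (hf : ∀ m < nn, coeff m f = 0) :
    (∀ N < nn + a, coeff N (σ f - f) = 0) ∧
      coeff (nn + a) (σ f - f)
        = (nn : k) * coeff nn f * coeff (a + 1) (σ X - X) := by
  have hσX : σ X = X + (σ X - X) := by ring
  have key : ∀ N, coeff N (σ f - f)
      = ∑ m ∈ Finset.range (N + 1),
          coeff m f * coeff N ((X + (σ X - X)) ^ m - (X : PowerSeries k) ^ m) := by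
    intro N
    have : σ f - f = σ f - (1 : PowerSeries k ≃ₐ[k] PowerSeries k) f := rfl
    rw [this, coeff_sub_formula]
    refine Finset.sum_congr rfl fun m _ => ?_
    rw [← hσX]
    rfl
  constructor
  · intro N hN
    rw [key]
    refine Finset.sum_eq_zero fun m hm => ?_
    rcases lt_or_ge m nn with h1 | h1
    · rw [hf m h1, zero_mul]
    · rw [(coeff_pow_add_sub ha hA m).1 N (by omega), mul_zero]
  · rw [key]
    rw [Finset.sum_eq_single nn]
    · rw [(coeff_pow_add_sub ha hA nn).2]; ring
    · intro b hb hbne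
      rcases lt_or_ge b nn with h1 | h1
      · rw [hf b h1, zero_mul]
      · rw [(coeff_pow_add_sub ha hA b).1 (nn + a) (by omega), mul_zero]
    · intro hnn
      exact absurd (Finset.mem_range.mpr (by omega)) hnn



/-- multiplicativity of the first coefficient. -/
lemma coeff_one_mul_apply (σ τ : PowerSeries k ≃ₐ[k] PowerSeries k) :
    coeff 1 ((σ * τ) X) = coeff 1 (σ X) * coeff 1 (τ X) := by
  rw [AlgEquiv.mul_apply, coeff_algEquiv_apply]
  rw [show (1 : ℕ) + 1 = 2 by rfl, Finset.sum_range_succ, Finset.sum_range_one]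
  rw [pow_zero, pow_one, coeff_one, if_neg one_ne_zero, mul_zero, zero_add, mul_comm]

lemma coeff_one_pow_apply (σ : PowerSeries k ≃ₐ[k] PowerSeries k) (j : ℕ) :
    coeff 1 ((σ ^ j) X) = (coeff 1 (σ X)) ^ j := by
  induction j with
  | zero =>
    simp only [pow_zero]
    exact coeff_one_X
  | succ j ih =>
    rw [pow_succ, pow_succ, coeff_one_mul_apply, ih]



lemma mem_ramSet_iff {G₀ : Subgroup (PowerSeries k ≃ₐ[k] PowerSeries k)}
    {i : ℕ} {σ : PowerSeries k ≃ₐ[k] PowerSeries k} :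
    σ ∈ _root_.ramificationSet G₀ i ↔ σ ∈ G₀ ∧ ∀ N < i + 1, coeff N (σ X - X) = 0 := by
  unfold _root_.ramificationSet
  simp only [Set.mem_setOf_eq]
  refine and_congr_right fun _ => ?_
  rw [show ((i : ℕ∞) + 1) = ((i + 1 : ℕ) : ℕ∞) by push_cast; ring]
  constructor
  · intro h N hN
    exact PowerSeries.coeff_of_lt_order N (lt_of_lt_of_le (by exact_mod_cast hN) h)
  · intro h
    exact PowerSeries.nat_le_order _ _ h

end RamAux

/-- If `G₀` is a nontrivial finite `p`-subgroup of `Aut_k(k[[x]])` with ramification jumps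
`m 0 < m 1 < ... < m (n-1)`, then all the jumps are congruent modulo `p`
(i.e. `m j ≡ m 0 (mod p)` for all `j`). -/
theorem stmt0 {k : Type*} [Field k] [IsAlgClosed k] (p : ℕ) [Fact p.Prime] [CharP k p]
    (G₀ : Subgroup (PowerSeries k ≃ₐ[k] PowerSeries k)) [Finite G₀]
    (hnt : G₀ ≠ ⊥) (hpG : IsPGroup p G₀)
    (n : ℕ) (m : Fin n → ℕ) (hmono : StrictMono m)
    (hrange : Set.range m = ramificationJumps G₀) :
    ∀ i j : Fin n, m i ≡ m j [MOD p] := by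
  classical
  intro i j
  have hn : 0 < n := i.pos
  set L : Fin n := ⟨n - 1, by omega⟩ with hL
  set M : ℕ := m L with hM
  have hle : ∀ t : Fin n, m t ≤ M := by
    intro t
    exact hmono.monotone (by rw [Fin.le_def]; simp only [hL]; omega)
  -- every element of G₀ has σ X - X vanishing in degrees 0 and 1
  have key2 : ∀ σ, σ ∈ G₀ → ∀ N < 2, coeff N (σ X - X) = 0 := by
    intro σ hσ N hN
    interval_cases N
    · rw [map_sub, coeff_zero_eq_constantCoeff_apply, coeff_zero_eq_constantCoeff_apply,
        RamAux.constantCoeff_apply_X, constantCoeff_X, sub_self]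
    · obtain ⟨r, hr⟩ := hpG ⟨σ, hσ⟩
      have hσpow : σ ^ (p ^ r) = 1 := by
        have := congrArg (Subgroup.subtype G₀) hr
        simpa using this
      have ht : (coeff 1 (σ X)) ^ (p ^ r) = 1 := by
        rw [← RamAux.coeff_one_pow_apply, hσpow]
        simp [AlgEquiv.one_apply, coeff_one_X]
      have h0 : (coeff 1 (σ X) - 1) ^ (p ^ r) = 0 := by
        rw [sub_pow_char_pow, ht, one_pow, sub_self]
      have hpr : (p : ℕ) ^ r ≠ 0 := (pow_pos (Nat.Prime.pos Fact.out) r).ne'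
      have := (pow_eq_zero_iff hpr).mp h0
      rw [map_sub, coeff_one_X]
      exact this
  -- the break of any nontrivial element of G₀ is a jump, hence between 1 and M
  have break_spec : ∀ σ, σ ∈ G₀ → σ ≠ 1 → ∃ s, 1 ≤ s ∧ s ≤ M ∧
      (∀ N < s + 1, coeff N (σ X - X) = 0) ∧ coeff (s + 1) (σ X - X) ≠ 0 := by
    intro σ hσ hone
    have hne : σ X - X ≠ 0 := by
      intro h
      exact hone (RamAux.algEquiv_eq_one_of_X σ (by rwa [sub_eq_zero] at h))
    have hex : ∃ N, coeff N (σ X - X) ≠ 0 := by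
      by_contra hc
      push_neg at hc
      exact hne (PowerSeries.ext fun N => by rw [hc N, map_zero])
    set v := Nat.find hex with hv'
    have hv : coeff v (σ X - X) ≠ 0 := Nat.find_spec hex
    have hvmin : ∀ N < v, coeff N (σ X - X) = 0 := by
      intro N hN
      by_contra hc
      exact absurd hN (not_lt.mpr (Nat.find_le hc))
    have hv2 : 2 ≤ v := by
      by_contra hc
      exact hv (key2 σ hσ v (by omega))
    have hveq : v - 1 + 1 = v := by omega
    have hmem : σ ∈ ramificationSet G₀ (v - 1) :=
      RamAux.mem_ramSet_iff.mpr ⟨hσ, fun N hN => hvmin N (by omega)⟩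
    have hnmem : σ ∉ ramificationSet G₀ (v - 1 + 1) := by
      intro hmem'
      exact hv ((RamAux.mem_ramSet_iff.mp hmem').2 v (by omega))
    have hjump : (v - 1) ∈ ramificationJumps G₀ := by
      simp only [ramificationJumps, Set.mem_setOf_eq]
      intro heq
      exact hnmem (heq ▸ hmem)
    rw [← hrange] at hjump
    obtain ⟨t, ht⟩ := hjump
    have hMle := hle t
    refine ⟨v - 1, by omega, by omega, fun N hN => hvmin N (by omega), ?_⟩
    rw [hveq]
    exact hv
  -- every jump has a witness with break exactly that jump
  have jump_wit : ∀ s ∈ ramificationJumps G₀, ∃ σ, σ ∈ G₀ ∧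
      (∀ N < s + 1, coeff N (σ X - X) = 0) ∧ coeff (s + 1) (σ X - X) ≠ 0 := by
    intro s hs
    have hsub : ramificationSet G₀ (s + 1) ⊆ ramificationSet G₀ s := by
      intro σ hσ
      rw [RamAux.mem_ramSet_iff] at *
      exact ⟨hσ.1, fun N hN => hσ.2 N (by omega)⟩
    have hss : ramificationSet G₀ (s + 1) ⊂ ramificationSet G₀ s :=
      hsub.ssubset_of_ne (Ne.symm hs)
    obtain ⟨σ, hσ1, hσ2⟩ := Set.exists_of_ssubset hss
    rw [RamAux.mem_ramSet_iff] at hσ1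
    refine ⟨σ, hσ1.1, hσ1.2, fun hc => hσ2 (RamAux.mem_ramSet_iff.mpr ⟨hσ1.1, ?_⟩)⟩
    intro N hN
    rcases lt_or_ge N (s + 1) with h1 | h1
    · exact hσ1.2 N h1
    · have hNe : N = s + 1 := by omega
      rwa [hNe]
  -- it suffices to show every jump is congruent to the largest one
  suffices H : ∀ t : Fin n, m t ≡ M [MOD p] by
    exact (H i).trans (H j).symm
  intro t
  rcases eq_or_lt_of_le (hle t) with heq | hlt
  · exact heq ▸ Nat.ModEq.refl _
  set a : ℕ := m t with ha'
  have hat : a ∈ ramificationJumps G₀ := by rw [← hrange]; exact ⟨t, rfl⟩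
  have hMt : M ∈ ramificationJumps G₀ := by rw [← hrange]; exact ⟨L, rfl⟩
  obtain ⟨σ, hσG, hσlow, hσlead⟩ := jump_wit a hat
  obtain ⟨τ, hτG, hτlow, hτlead⟩ := jump_wit M hMt
  have ha1 : 1 ≤ a := by
    by_contra hc
    have ha0 : a = 0 := by omega
    exact hσlead (key2 σ hσG (a + 1) (by omega))
  have hM1 : 1 ≤ M := by omega
  set A : PowerSeries k := σ X - X with hA
  set B : PowerSeries k := τ X - X with hB
  have D1 := RamAux.coeff_apply_sub_self σ ha1 hσlow (f := B) (nn := M + 1) hτlow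
  have D2 := RamAux.coeff_apply_sub_self τ hM1 hτlow (f := A) (nn := a + 1) hσlow
  have h1 : (σ * τ) X = σ X + σ B := by
    rw [AlgEquiv.mul_apply, show τ X = X + B by rw [hB]; ring, map_add]
  have h2 : (τ * σ) X = τ X + τ A := by
    rw [AlgEquiv.mul_apply, show σ X = X + A by rw [hA]; ring, map_add]
  have hgh : (σ * τ) X - (τ * σ) X = (σ B - B) - (τ A - A) := by
    rw [h1, h2, hA, hB]
    abel
  have hZ : ∀ N < a + M + 1, coeff N ((σ * τ) X - (τ * σ) X) = 0 := by
    intro N hN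
    rw [hgh, map_sub, D1.1 N (by omega), D2.1 N (by omega), sub_self]
  have hc1 : coeff (a + M + 1) (σ B - B)
      = ((M + 1 : ℕ) : k) * coeff (M + 1) B * coeff (a + 1) A := by
    rw [show a + M + 1 = (M + 1) + a by omega]
    exact D1.2
  have hc2 : coeff (a + M + 1) (τ A - A)
      = ((a + 1 : ℕ) : k) * coeff (a + 1) A * coeff (M + 1) B := by
    rw [show a + M + 1 = (a + 1) + M by omega]
    exact D2.2
  have hlead : coeff (a + M + 1) ((σ * τ) X - (τ * σ) X)
      = ((M + 1 : ℕ) : k) * coeff (M + 1) B * coeff (a + 1) A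
        - ((a + 1 : ℕ) : k) * coeff (a + 1) A * coeff (M + 1) B := by
    rw [hgh, map_sub, hc1, hc2]
  -- the commutator
  have hρG : σ * τ * σ⁻¹ * τ⁻¹ ∈ G₀ :=
    mul_mem (mul_mem (mul_mem hσG hτG) (inv_mem hσG)) (inv_mem hτG)
  have hρgh : σ * τ * σ⁻¹ * τ⁻¹ = (σ * τ) * (τ * σ)⁻¹ := by group
  set e : PowerSeries k := (τ * σ)⁻¹ X - X with he
  have helow : ∀ N < 2, coeff N e = 0 := key2 _ (inv_mem (mul_mem hτG hσG))
  have h3 : (τ * σ)⁻¹ X = X + e := by rw [he]; ring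
  have h4 : (σ * τ * σ⁻¹ * τ⁻¹) X = (σ * τ) X + (σ * τ) e := by
    rw [hρgh, AlgEquiv.mul_apply, h3, map_add]
  have h5 : (τ * σ) X + (τ * σ) e = X := by
    rw [← map_add, ← h3, ← AlgEquiv.mul_apply, mul_inv_cancel]
    rfl
  have hρX : (σ * τ * σ⁻¹ * τ⁻¹) X - X = ((σ * τ) X - (τ * σ) X) + ((σ * τ) e - (τ * σ) e) := by
    calc (σ * τ * σ⁻¹ * τ⁻¹) X - X
        = ((σ * τ) X + (σ * τ) e) - ((τ * σ) X + (τ * σ) e) := by rw [h4, h5]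
      _ = ((σ * τ) X - (τ * σ) X) + ((σ * τ) e - (τ * σ) e) := by abel
  have hge : ∀ N < (a + M + 1) + 1, coeff N ((σ * τ) e - (τ * σ) e) = 0 :=
    RamAux.coeff_sub_apply_vanish (σ * τ) (τ * σ) hZ (n' := 1) helow
  have hρ1 : σ * τ * σ⁻¹ * τ⁻¹ = 1 := by
    by_contra hc
    obtain ⟨s, hs1, hsM, hslow, hslead⟩ := break_spec _ hρG hc
    apply hslead
    rw [hρX, map_add, hZ (s + 1) (by omega), hge (s + 1) (by omega), add_zero]
  have hzero0 : coeff (a + M + 1) ((σ * τ * σ⁻¹ * τ⁻¹) X - X) = 0 := by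
    rw [hρ1]
    simp
  rw [hρX, map_add, hge (a + M + 1) (by omega), add_zero, hlead] at hzero0
  have hfac : (((M + 1 : ℕ) : k) - ((a + 1 : ℕ) : k))
      * (coeff (a + 1) A * coeff (M + 1) B) = 0 := by
    linear_combination hzero0
  rcases mul_eq_zero.mp hfac with hfin | hfin
  · have hcast : ((M + 1 : ℕ) : k) = ((a + 1 : ℕ) : k) := sub_eq_zero.mp hfin
    have hmod : (M + 1) ≡ (a + 1) [MOD p] := (CharP.natCast_eq_natCast k p).mp hcast
    exact (Nat.ModEq.add_right_cancel' 1 hmod).symm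
  · exact absurd hfin (mul_ne_zero hσlead hτlead)
end

section
/- Let k be a field of characteristic p > 0 and let m be a positive integer prime to p. There exists a unique k-algebra automorphism σ of k[[x]] such that σ(x)^m · (1 + x^m) = x^m and σ(x) ≡ x (mod x² k[[x]]) (informally, σ(x) = x/(1+x^m)^{1/m}). This σ satisfies σ^p = id, and for every i with 1 ≤ i ≤ p−1 one has ν_x(σ^i(x) − x) = m + 1; in particular σ generates an action of Z/pZ on k[[x]] with conductor m. -/
open PowerSeries

noncomputable section StmtAux

variable {k : Type*} [Field k]

namespace StmtAux

instance charP_powerSeries (p : ℕ) [CharP k p] : CharP (PowerSeries k) p where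
  cast_eq_zero_iff n := by
    constructor
    · intro h
      have h2 : ((n : k)) = 0 := by
        have := congrArg (constantCoeff) h
        simpa using this
      exact (CharP.cast_eq_zero_iff k p n).mp h2
    · intro h
      have h2 : ((n : k)) = 0 := (CharP.cast_eq_zero_iff k p n).mpr h
      rw [← map_natCast (C (R := k)) n, h2, map_zero]

lemma X_pow_dvd_sub_trunc (f : PowerSeries k) (n : ℕ) :
    (X : PowerSeries k) ^ n ∣ f - ↑(trunc n f) := by
  rw [PowerSeries.X_pow_dvd_iff]
  intro m hm
  simp [Polynomial.coeff_coe, coeff_trunc, hm]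

lemma X_pow_dvd_aeval {g : PowerSeries k} (hg : constantCoeff g = 0) {n : ℕ}
    {P : Polynomial k} (hP : (Polynomial.X : Polynomial k) ^ n ∣ P) :
    (X : PowerSeries k) ^ n ∣ Polynomial.aeval g P := by
  obtain ⟨Q, rfl⟩ := hP
  rw [map_mul, map_pow, Polynomial.aeval_X]
  exact Dvd.dvd.mul_right (pow_dvd_pow_of_dvd (X_dvd_iff.mpr hg) n) _

/-- Substitution of `g` into `f`, defined coefficientwise via truncations. -/
def substFun (g f : PowerSeries k) : PowerSeries k :=
  PowerSeries.mk fun n => coeff n (Polynomial.aeval g (trunc (n + 1) f))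

lemma coeff_aeval_trunc {g : PowerSeries k} (hg : constantCoeff g = 0) (f : PowerSeries k)
    {n N : ℕ} (h : n < N) :
    coeff n (Polynomial.aeval g (trunc N f)) = coeff n (substFun g f) := by
  rw [substFun, coeff_mk]
  have hd : (Polynomial.X : Polynomial k) ^ (n + 1) ∣ trunc N f - trunc (n + 1) f := by
    rw [Polynomial.X_pow_dvd_iff]
    intro d hd
    have h1 : d < N := lt_of_lt_of_le hd h
    simp [coeff_trunc, h1, hd, Polynomial.coeff_sub]
  have h2 := X_pow_dvd_aeval hg hd
  rw [map_sub] at h2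
  have h3 := (PowerSeries.X_pow_dvd_iff.mp h2) n (Nat.lt_succ_self n)
  rw [map_sub, sub_eq_zero] at h3
  exact h3

lemma coeff_aeval_coe_trunc {g : PowerSeries k} (hg : constantCoeff g = 0)
    (P : Polynomial k) (n : ℕ) :
    coeff n (Polynomial.aeval g P) =
      coeff n (Polynomial.aeval g (trunc (n + 1) (↑P : PowerSeries k))) := by
  have hd : (Polynomial.X : Polynomial k) ^ (n + 1) ∣ P - trunc (n + 1) (↑P : PowerSeries k) := by
    rw [Polynomial.X_pow_dvd_iff]
    intro d hd
    simp [coeff_trunc, Polynomial.coeff_coe, Polynomial.coeff_sub, hd]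
  have h2 := X_pow_dvd_aeval hg hd
  rw [map_sub] at h2
  have h3 := (PowerSeries.X_pow_dvd_iff.mp h2) n (Nat.lt_succ_self n)
  rw [map_sub, sub_eq_zero] at h3
  exact h3

lemma X_pow_dvd_substFun_sub_aeval {g : PowerSeries k} (hg : constantCoeff g = 0)
    (f : PowerSeries k) (n : ℕ) :
    (X : PowerSeries k) ^ (n + 1) ∣ substFun g f - Polynomial.aeval g (trunc (n + 1) f) := by
  rw [PowerSeries.X_pow_dvd_iff]
  intro i hi
  rw [map_sub, coeff_aeval_trunc hg f hi, sub_self]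

/-- Substitution as an algebra homomorphism. -/
def substHom (g : PowerSeries k) (hg : constantCoeff g = 0) :
    PowerSeries k →ₐ[k] PowerSeries k where
  toFun := substFun g
  map_one' := by
    ext n
    rw [substFun, coeff_mk, trunc_one, map_one]
  map_mul' f₁ f₂ := by
    ext n
    have key : coeff n (substFun g (f₁ * f₂)) =
        coeff n (Polynomial.aeval g (trunc (n + 1) f₁) *
          Polynomial.aeval g (trunc (n + 1) f₂)) := by
      rw [substFun, coeff_mk, ← map_mul]
      rw [coeff_aeval_coe_trunc hg (trunc (n + 1) f₁ * trunc (n + 1) f₂) n]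
      congr 2
      rw [Polynomial.coe_mul, trunc_trunc_mul_trunc]
    rw [key]
    have hA := X_pow_dvd_substFun_sub_aeval hg f₁ n
    have hB := X_pow_dvd_substFun_sub_aeval hg f₂ n
    set A := Polynomial.aeval g (trunc (n + 1) f₁) with hAdef
    set B := Polynomial.aeval g (trunc (n + 1) f₂) with hBdef
    have hd : (X : PowerSeries k) ^ (n + 1) ∣ substFun g f₁ * substFun g f₂ - A * B := by
      have : substFun g f₁ * substFun g f₂ - A * B
          = (substFun g f₁ - A) * substFun g f₂ + A * (substFun g f₂ - B) := by ring
      rw [this]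
      exact dvd_add (hA.mul_right _) (hB.mul_left _)
    have h0 := (PowerSeries.X_pow_dvd_iff.mp hd) n (Nat.lt_succ_self n)
    rw [map_sub, sub_eq_zero] at h0
    exact h0.symm
  map_zero' := by
    ext n
    simp [substFun, map_zero]
  map_add' f₁ f₂ := by
    ext n
    simp [substFun, map_add, map_add]
  commutes' c := by
    show substFun g (algebraMap k (PowerSeries k) c) = algebraMap k (PowerSeries k) c
    rw [← C_eq_algebraMap]
    ext n
    rw [substFun, coeff_mk, trunc_C]
    simp [Polynomial.aeval_C, C_eq_algebraMap]

@[simp] lemma substHom_apply (g : PowerSeries k) (hg : constantCoeff g = 0)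
    (f : PowerSeries k) : substHom g hg f = substFun g f := rfl

lemma substHom_X (g : PowerSeries k) (hg : constantCoeff g = 0) :
    substHom g hg X = g := by
  ext n
  rw [substHom_apply, substFun, coeff_mk]
  match n with
  | 0 =>
    have h1 : trunc 1 (X : PowerSeries k) = 0 := by
      apply Polynomial.ext
      intro m
      rcases Nat.eq_zero_or_pos m with h | h
      · subst h; simp [coeff_trunc]
      · simp [coeff_trunc, Nat.lt_one_iff, Nat.pos_iff_ne_zero.mp h]
    rw [h1, map_zero, map_zero, coeff_zero_eq_constantCoeff]
    exact hg.symm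
  | n + 1 =>
    rw [trunc_X, Polynomial.aeval_X]

lemma aeval_X_eq_coe (P : Polynomial k) :
    Polynomial.aeval (X : PowerSeries k) P = (↑P : PowerSeries k) := by
  induction P using Polynomial.induction_on' with
  | add p q hp hq => rw [map_add, hp, hq, Polynomial.coe_add]
  | monomial i a =>
    rw [Polynomial.aeval_monomial, Polynomial.coe_monomial, ← C_eq_algebraMap]
    ext n
    rw [coeff_C_mul_X_pow, PowerSeries.coeff_monomial]

/-- Every `k`-algebra endomorphism of `k[[X]]` sending `X` into the maximal ideal
is a substitution. -/
lemma eq_substHom (φ : PowerSeries k →ₐ[k] PowerSeries k)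
    (h0 : constantCoeff (φ X) = 0) : φ = substHom (φ X) h0 := by
  apply AlgHom.ext
  intro f
  ext n
  obtain ⟨h, hh⟩ := X_pow_dvd_sub_trunc f (n + 1)
  have hf : f = (↑(trunc (n + 1) f) : PowerSeries k) + X ^ (n + 1) * h := by
    rw [← hh]; abel
  have hφP : ∀ P : Polynomial k, φ (↑P : PowerSeries k) = Polynomial.aeval (φ X) P := by
    intro P
    rw [Polynomial.aeval_algHom_apply, aeval_X_eq_coe]
  have h1 : φ f = Polynomial.aeval (φ X) (trunc (n + 1) f) + (φ X) ^ (n + 1) * φ h := by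
    conv_lhs => rw [hf]
    rw [map_add, map_mul, map_pow, hφP]
  rw [h1, map_add, substHom_apply]
  rw [coeff_aeval_trunc h0 f (Nat.lt_succ_self n)]
  have h2 : coeff n ((φ X) ^ (n + 1) * φ h) = 0 := by
    have hdvd : (X : PowerSeries k) ^ (n + 1) ∣ (φ X) ^ (n + 1) * φ h :=
      Dvd.dvd.mul_right (pow_dvd_pow_of_dvd (X_dvd_iff.mpr h0) _) _
    exact (PowerSeries.X_pow_dvd_iff.mp hdvd) n (Nat.lt_succ_self n)
  rw [h2, add_zero]

lemma substHom_congr {g g' : PowerSeries k} (hg : constantCoeff g = 0)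
    (hg' : constantCoeff g' = 0) (h : g = g') : substHom g hg = substHom g' hg' := by
  subst h; rfl

lemma substHom_X_eq_id :
    substHom (X : PowerSeries k) constantCoeff_X = AlgHom.id k (PowerSeries k) := by
  have h := eq_substHom (AlgHom.id k (PowerSeries k))
    (by simpa using (constantCoeff_X (R := k)))
  exact (substHom_congr constantCoeff_X _ rfl).trans h.symm

/-! ### m-th roots -/

lemma X_pow_dvd_pow_sub_one (p : ℕ) [Fact p.Prime] [CharP k p]
    (u : PowerSeries k) (hu : constantCoeff u = 1) (n t : ℕ) :
    (X : PowerSeries k) ^ (p ^ n) ∣ u ^ (p ^ n * t) - 1 := by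
  have hd : (X : PowerSeries k) ∣ u - 1 := X_dvd_iff.mpr (by simp [hu])
  have h1 : u ^ (p ^ n) = 1 + (u - 1) ^ (p ^ n) := by
    have := add_pow_char_pow (R := PowerSeries k) 1 (u - 1) p n
    simpa using this
  have h2 : u ^ (p ^ n * t) - 1 = (1 + (u - 1) ^ (p ^ n)) ^ t - 1 ^ t := by
    rw [pow_mul, h1, one_pow]
  rw [h2]
  have h3 : (1 + (u - 1) ^ (p ^ n)) - 1 ∣ (1 + (u - 1) ^ (p ^ n)) ^ t - 1 ^ t :=
    sub_dvd_pow_sub_pow _ _ t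
  have h4 : (1 + (u - 1) ^ (p ^ n)) - 1 = (u - 1) ^ (p ^ n) := by ring
  rw [h4] at h3
  exact dvd_trans (pow_dvd_pow_of_dvd hd _) h3

lemma X_pow_dvd_pow_sub_pow_of_le (p : ℕ) [Fact p.Prime] [CharP k p]
    (u : PowerSeries k) (hu : constantCoeff u = 1) {a a' n : ℕ}
    (hle : a' ≤ a) (h : a ≡ a' [MOD p ^ n]) :
    (X : PowerSeries k) ^ (p ^ n) ∣ u ^ a - u ^ a' := by
  obtain ⟨t, ht⟩ := (Nat.modEq_iff_dvd' hle).mp h.symm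
  have ha : a = a' + p ^ n * t := by omega
  subst ha
  have : u ^ (a' + p ^ n * t) - u ^ a' = u ^ a' * (u ^ (p ^ n * t) - 1) := by
    rw [pow_add]; ring
  rw [this]
  exact (X_pow_dvd_pow_sub_one p u hu n t).mul_left _

lemma X_pow_dvd_pow_sub_pow (p : ℕ) [Fact p.Prime] [CharP k p]
    (u : PowerSeries k) (hu : constantCoeff u = 1) {a a' n : ℕ}
    (h : a ≡ a' [MOD p ^ n]) :
    (X : PowerSeries k) ^ (p ^ n) ∣ u ^ a - u ^ a' := by
  rcases le_total a' a with hle | hle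
  · exact X_pow_dvd_pow_sub_pow_of_le p u hu hle h
  · have := X_pow_dvd_pow_sub_pow_of_le p u hu hle h.symm
    have h2 : u ^ a - u ^ a' = -(u ^ a' - u ^ a) := by ring
    rw [h2]
    exact this.neg_right

lemma exists_mth_root (p : ℕ) [Fact p.Prime] [CharP k p] (m : ℕ) (hmp : ¬ p ∣ m)
    (u : PowerSeries k) (hu : constantCoeff u = 1) :
    ∃ w : PowerSeries k, constantCoeff w = 1 ∧ w ^ m = u := by
  classical
  have hp : p.Prime := Fact.out
  have hco : ∀ j : ℕ, Nat.Coprime m (p ^ (j + 1)) := by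
    intro j
    exact (Nat.Coprime.pow_right _ ((hp.coprime_iff_not_dvd.mpr hmp)).symm)
  have hlt : ∀ j : ℕ, 1 < p ^ (j + 1) := by
    intro j
    exact Nat.one_lt_pow (Nat.succ_ne_zero j) hp.one_lt
  choose b hb using fun j => (Nat.exists_mul_mod_eq_one_of_coprime (hco j) (hlt j)).imp fun _ h => h.2
  have hbmod : ∀ j, m * b j ≡ 1 [MOD p ^ (j + 1)] := by
    intro j
    have := hb j
    unfold Nat.ModEq
    rw [this, Nat.mod_eq_of_lt (hlt j)]
  set w : PowerSeries k := PowerSeries.mk fun j => coeff j (u ^ b j) with hw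
  have hjlt : ∀ j : ℕ, j < p ^ (j + 1) := by
    intro j
    calc j < j + 1 := Nat.lt_succ_self j
    _ < p ^ (j + 1) := Nat.lt_pow_self hp.one_lt
  have key : ∀ n : ℕ, (X : PowerSeries k) ^ (n + 1) ∣ w - u ^ b n := by
    intro n
    rw [PowerSeries.X_pow_dvd_iff]
    intro j hj
    have hjn : j + 1 ≤ n + 1 := hj
    have hmod : b j ≡ b n [MOD p ^ (j + 1)] := by
      have h1 : m * b j ≡ 1 [MOD p ^ (j + 1)] := hbmod j
      have h2 : m * b n ≡ 1 [MOD p ^ (j + 1)] :=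
        (hbmod n).of_dvd (pow_dvd_pow p hjn)
      have h3 : m * b j ≡ m * b n [MOD p ^ (j + 1)] := h1.trans h2.symm
      exact Nat.ModEq.cancel_left_of_coprime ((hco j).symm) h3
    have hdvd := X_pow_dvd_pow_sub_pow p u hu hmod
    have hcoeff := (PowerSeries.X_pow_dvd_iff.mp hdvd) j (hjlt j)
    rw [map_sub, sub_eq_zero] at hcoeff
    rw [map_sub, hw, coeff_mk, hcoeff, sub_self]
  refine ⟨w, ?_, ?_⟩
  · have : constantCoeff w = coeff 0 (u ^ b 0) := by
      rw [hw, ← coeff_zero_eq_constantCoeff]; rw [coeff_mk]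
    rw [this, coeff_zero_eq_constantCoeff, map_pow, hu, one_pow]
  · ext n
    have h1 : (X : PowerSeries k) ^ (n + 1) ∣ w ^ m - (u ^ b n) ^ m :=
      dvd_trans (key n) (sub_dvd_pow_sub_pow w (u ^ b n) m)
    have h2 : (X : PowerSeries k) ^ (n + 1) ∣ (u ^ b n) ^ m - u := by
      rw [← pow_mul]
      have hmod : b n * m ≡ 1 [MOD p ^ (n + 1)] := by
        rw [mul_comm]; exact hbmod n
      have hdvd := X_pow_dvd_pow_sub_pow p u hu hmod
      rw [pow_one] at hdvd
      exact dvd_trans (pow_dvd_pow X (Nat.succ_le_of_lt (hjlt n))) hdvd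
    have h3 : (X : PowerSeries k) ^ (n + 1) ∣ w ^ m - u := by
      have := dvd_add h1 h2
      rwa [sub_add_sub_cancel] at this
    have h4 := (PowerSeries.X_pow_dvd_iff.mp h3) n (Nat.lt_succ_self n)
    rw [map_sub, sub_eq_zero] at h4
    exact h4

lemma mth_root_unique {m : ℕ} (hm' : (m : k) ≠ 0) {w w' : PowerSeries k}
    (h : constantCoeff w = 1) (h' : constantCoeff w' = 1)
    (he : w ^ m = w' ^ m) : w = w' := by
  have hgeom := geom_sum₂_mul w w' m
  rw [he, sub_self] at hgeom
  rcases mul_eq_zero.mp hgeom with hS0 | hww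
  · exfalso
    apply hm'
    have hS : constantCoeff (∑ i ∈ Finset.range m, w ^ i * w' ^ (m - 1 - i)) = (m : k) := by
      rw [map_sum]
      have : ∀ i ∈ Finset.range m,
          constantCoeff (w ^ i * w' ^ (m - 1 - i)) = 1 := by
        intro i _
        rw [map_mul, map_pow, map_pow, h, h', one_pow, one_pow, one_mul]
      rw [Finset.sum_congr rfl this]
      simp
    rw [← hS, hS0, map_zero]
  · exact sub_eq_zero.mp hww

/-! ### Specific lemmas -/

variable (p : ℕ) [Fact p.Prime] [CharP k p] (m : ℕ)

lemma eq_X_of_pow_eq (hm' : (m : k) ≠ 0) (z : PowerSeries k)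
    (hz2 : (X : PowerSeries k) ^ 2 ∣ z - X) (hzm : z ^ m = X ^ m) : z = X := by
  obtain ⟨h, hh⟩ := hz2
  have hz : z = X * (1 + X * h) := by
    have : z = X + X ^ 2 * h := by rw [← hh]; ring
    rw [this]; ring
  have hη : constantCoeff (1 + X * h) = 1 := by simp
  have h1 : (X : PowerSeries k) ^ m * (1 + X * h) ^ m = X ^ m * 1 ^ m := by
    rw [← mul_pow, ← hz, hzm, one_pow, mul_one]
  have hXm : (X : PowerSeries k) ^ m ≠ 0 := pow_ne_zero _ X_ne_zero
  have h2 : (1 + X * h) ^ m = 1 ^ m := mul_left_cancel₀ hXm h1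
  have h3 : (1 + X * h) = 1 := mth_root_unique hm' hη (by simp) h2
  rw [hz, h3, mul_one]

lemma X_sq_dvd_subst {g f : PowerSeries k} (hgc : constantCoeff g = 0)
    (hg2 : (X : PowerSeries k) ^ 2 ∣ g - X) (hf2 : (X : PowerSeries k) ^ 2 ∣ f - X) :
    (X : PowerSeries k) ^ 2 ∣ substHom g hgc f - X := by
  obtain ⟨h, hh⟩ := hf2
  have h1 : substHom g hgc f - g = g ^ 2 * substHom g hgc h := by
    calc substHom g hgc f - g = substHom g hgc f - substHom g hgc X := by rw [substHom_X]
    _ = substHom g hgc (f - X) := by rw [map_sub]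
    _ = substHom g hgc (X ^ 2 * h) := by rw [hh]
    _ = g ^ 2 * substHom g hgc h := by rw [map_mul, map_pow, substHom_X]
  have h2 : (X : PowerSeries k) ^ 2 ∣ substHom g hgc f - g := by
    rw [h1]
    exact (pow_dvd_pow_of_dvd (X_dvd_iff.mpr hgc) 2).mul_right _
  have := dvd_add h2 hg2
  rwa [sub_add_sub_cancel] at this

lemma subst_eq_X (hm' : (m : k) ≠ 0) {c c' : k} (hcc : c + c' = 0)
    {g g' : PowerSeries k} (hgc : constantCoeff g = 0) (hg'c : constantCoeff g' = 0)
    (hg2 : (X : PowerSeries k) ^ 2 ∣ g - X) (hg'2 : (X : PowerSeries k) ^ 2 ∣ g' - X)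
    (hgm : g ^ m * (1 + C c * X ^ m) = X ^ m)
    (hg'm : g' ^ m * (1 + C c' * X ^ m) = X ^ m) :
    substHom g' hg'c g = X := by
  set z := substHom g' hg'c g with hzdef
  have hz2 : (X : PowerSeries k) ^ 2 ∣ z - X := X_sq_dvd_subst hg'c hg'2 hg2
  have h1 : z ^ m * (1 + C c * g' ^ m) = g' ^ m := by
    have := congrArg (substHom g' hg'c) hgm
    simp only [map_mul, map_add, map_one, map_pow, substHom_X] at this
    have hC : substHom g' hg'c (C c) = C c := by
      rw [C_eq_algebraMap]; exact (substHom g' hg'c).commutes c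
    rw [hC] at this
    exact this
  have e1 : (1 + C c * g' ^ m) * (1 + C c' * X ^ m) = 1 := by
    have expand : (1 + C c * g' ^ m) * (1 + C c' * X ^ m)
        = 1 + C c' * X ^ m + C c * (g' ^ m * (1 + C c' * X ^ m)) := by ring
    rw [expand, hg'm]
    have hsum : C c' + C c = 0 := by
      rw [← map_add, add_comm c' c, hcc, map_zero]
    calc (1 : PowerSeries k) + C c' * X ^ m + C c * X ^ m
        = 1 + (C c' + C c) * X ^ m := by ring
    _ = 1 := by rw [hsum, zero_mul, add_zero]
  have h2 : z ^ m = X ^ m := by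
    calc z ^ m = z ^ m * ((1 + C c * g' ^ m) * (1 + C c' * X ^ m)) := by
          rw [e1, mul_one]
    _ = (z ^ m * (1 + C c * g' ^ m)) * (1 + C c' * X ^ m) := by ring
    _ = g' ^ m * (1 + C c' * X ^ m) := by rw [h1]
    _ = X ^ m := hg'm
  exact eq_X_of_pow_eq m hm' z hz2 h2

lemma C_mul_X_pow_eq_monomial (a : k) (n : ℕ) :
    C a * X ^ n = monomial n a := by
  ext j
  rw [coeff_C_mul_X_pow, PowerSeries.coeff_monomial]

end StmtAux

end StmtAux

open StmtAux

/-- Let `k` be a field of characteristic `p > 0` and `m` a positive integer prime to `p`.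
There is a unique `k`-algebra automorphism `σ` of `k[[x]]` with
`σ(x)^m * (1 + x^m) = x^m` and `σ(x) ≡ x (mod x²)` (informally `σ(x) = x/(1+x^m)^{1/m}`);
it satisfies `σ^p = id`, and `ν_x(σ^i(x) - x) = m + 1` for `1 ≤ i ≤ p - 1`, so `σ`
generates an action of `ℤ/pℤ` on `k[[x]]` with conductor `m`. -/
theorem stmt3 {k : Type*} [Field k] (p : ℕ) [Fact p.Prime] [CharP k p]
    (m : ℕ) (hm : 0 < m) (hmp : ¬ p ∣ m) :
    (∃! σ : PowerSeries k ≃ₐ[k] PowerSeries k,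
        (σ X) ^ m * (1 + X ^ m) = X ^ m ∧ X ^ 2 ∣ (σ X - X)) ∧
    ∀ σ : PowerSeries k ≃ₐ[k] PowerSeries k,
      (σ X) ^ m * (1 + X ^ m) = X ^ m → X ^ 2 ∣ (σ X - X) →
        σ ^ p = 1 ∧
        ∀ i : ℕ, 1 ≤ i → i ≤ p - 1 → ((σ ^ i) X - X).order = ((m + 1 : ℕ) : ℕ∞) := by
  classical
  have hp : p.Prime := Fact.out
  have hm' : (m : k) ≠ 0 := fun h => hmp ((CharP.cast_eq_zero_iff k p m).mp h)
  have hXm0 : constantCoeff ((X : PowerSeries k) ^ m) = 0 := by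
    rw [map_pow, constantCoeff_X, zero_pow hm.ne']
  have hA1 : constantCoeff ((1 : PowerSeries k) + X ^ m) = 1 := by simp [hXm0]
  have hB1 : constantCoeff ((1 : PowerSeries k) - X ^ m) = 1 := by simp [hXm0]
  have hAne : constantCoeff ((1 : PowerSeries k) + X ^ m) ≠ 0 := by
    rw [hA1]; exact one_ne_zero
  have hBne : constantCoeff ((1 : PowerSeries k) - X ^ m) ≠ 0 := by
    rw [hB1]; exact one_ne_zero
  have hAne0 : ((1 : PowerSeries k) + X ^ m) ≠ 0 := by
    intro hc; rw [hc, map_zero] at hA1; exact one_ne_zero hA1.symm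
  obtain ⟨w, hw1, hwm⟩ := exists_mth_root p m hmp (((1 : PowerSeries k) + X ^ m)⁻¹)
    (by rw [PowerSeries.constantCoeff_inv, hA1, inv_one])
  obtain ⟨w', hw'1, hw'm⟩ := exists_mth_root p m hmp (((1 : PowerSeries k) - X ^ m)⁻¹)
    (by rw [PowerSeries.constantCoeff_inv, hB1, inv_one])
  have hgc : constantCoeff (X * w) = 0 := by
    rw [map_mul, constantCoeff_X, zero_mul]
  have hg'c : constantCoeff (X * w') = 0 := by
    rw [map_mul, constantCoeff_X, zero_mul]
  have hg2 : (X : PowerSeries k) ^ 2 ∣ X * w - X := by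
    have h1 : X * w - X = X * (w - 1) := by ring
    rw [h1, pow_two]
    exact mul_dvd_mul dvd_rfl (X_dvd_iff.mpr (by simp [hw1]))
  have hg'2 : (X : PowerSeries k) ^ 2 ∣ X * w' - X := by
    have h1 : X * w' - X = X * (w' - 1) := by ring
    rw [h1, pow_two]
    exact mul_dvd_mul dvd_rfl (X_dvd_iff.mpr (by simp [hw'1]))
  have hgm0 : (X * w) ^ m * ((1 : PowerSeries k) + X ^ m) = X ^ m := by
    rw [mul_pow, hwm, mul_assoc, PowerSeries.inv_mul_cancel _ hAne, mul_one]
  have hg'm0 : (X * w') ^ m * ((1 : PowerSeries k) - X ^ m) = X ^ m := by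
    rw [mul_pow, hw'm, mul_assoc, PowerSeries.inv_mul_cancel _ hBne, mul_one]
  have hgmC : (X * w) ^ m * (1 + C 1 * X ^ m) = X ^ m := by
    rw [map_one, one_mul]; exact hgm0
  have hg'mC : (X * w') ^ m * (1 + C (-1) * X ^ m) = X ^ m := by
    have h1 : (1 : PowerSeries k) + C (-1) * X ^ m = 1 - X ^ m := by
      rw [map_neg, map_one]; ring
    rw [h1]; exact hg'm0
  have hgg' : substHom (X * w) hgc (X * w') = X :=
    subst_eq_X m hm' (show (-1 : k) + 1 = 0 by ring) hg'c hgc hg'2 hg2 hg'mC hgmC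
  have hg'g : substHom (X * w') hg'c (X * w) = X :=
    subst_eq_X m hm' (show (1 : k) + -1 = 0 by ring) hgc hg'c hg2 hg'2 hgmC hg'mC
  have comp1 : (substHom (X * w) hgc).comp (substHom (X * w') hg'c)
      = AlgHom.id k (PowerSeries k) := by
    have h2 : ((substHom (X * w) hgc).comp (substHom (X * w') hg'c)) X = X := by
      rw [AlgHom.comp_apply, substHom_X]; exact hgg'
    have h0 : constantCoeff (((substHom (X * w) hgc).comp (substHom (X * w') hg'c)) X)
        = 0 := by rw [h2]; exact constantCoeff_X
    have h1 := eq_substHom _ h0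
    rw [h1]
    exact (substHom_congr h0 constantCoeff_X h2).trans substHom_X_eq_id
  have comp2 : (substHom (X * w') hg'c).comp (substHom (X * w) hgc)
      = AlgHom.id k (PowerSeries k) := by
    have h2 : ((substHom (X * w') hg'c).comp (substHom (X * w) hgc)) X = X := by
      rw [AlgHom.comp_apply, substHom_X]; exact hg'g
    have h0 : constantCoeff (((substHom (X * w') hg'c).comp (substHom (X * w) hgc)) X)
        = 0 := by rw [h2]; exact constantCoeff_X
    have h1 := eq_substHom _ h0
    rw [h1]
    exact (substHom_congr h0 constantCoeff_X h2).trans substHom_X_eq_id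
  set σ0 : PowerSeries k ≃ₐ[k] PowerSeries k :=
    AlgEquiv.ofAlgHom (substHom (X * w) hgc) (substHom (X * w') hg'c) comp1 comp2 with hσ0def
  have hσ0X : σ0 X = X * w := substHom_X (X * w) hgc
  have hprop1 : (σ0 X) ^ m * (1 + X ^ m) = X ^ m := by rw [hσ0X]; exact hgm0
  have hprop2 : (X : PowerSeries k) ^ 2 ∣ σ0 X - X := by rw [hσ0X]; exact hg2
  have keyuniq : ∀ τ : PowerSeries k ≃ₐ[k] PowerSeries k,
      (τ X) ^ m * (1 + X ^ m) = X ^ m → (X : PowerSeries k) ^ 2 ∣ (τ X - X) →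
        τ X = X * w := by
    intro τ hτm hτ2
    obtain ⟨h, hh⟩ := hτ2
    have hτX : τ X = X * (1 + X * h) := by
      have h1 : τ X = X + X ^ 2 * h := by rw [← hh]; ring
      rw [h1]; ring
    have hη1 : constantCoeff ((1 : PowerSeries k) + X * h) = 1 := by simp
    have e : (X : PowerSeries k) ^ m * ((1 + X * h) ^ m * (1 + X ^ m))
        = X ^ m * (w ^ m * (1 + X ^ m)) := by
      have l1 : (X : PowerSeries k) ^ m * ((1 + X * h) ^ m * (1 + X ^ m))
          = (X * (1 + X * h)) ^ m * (1 + X ^ m) := by rw [mul_pow]; ring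
      have l2 : (X : PowerSeries k) ^ m * (w ^ m * (1 + X ^ m))
          = (X * w) ^ m * (1 + X ^ m) := by rw [mul_pow]; ring
      rw [l1, l2, ← hτX, hτm, hgm0]
    have e2 : ((1 : PowerSeries k) + X * h) ^ m * (1 + X ^ m) = w ^ m * (1 + X ^ m) :=
      mul_left_cancel₀ (pow_ne_zero m X_ne_zero) e
    have e3 : ((1 : PowerSeries k) + X * h) ^ m = w ^ m := mul_right_cancel₀ hAne0 e2
    have e4 : (1 : PowerSeries k) + X * h = w := mth_root_unique hm' hη1 hw1 e3
    rw [hτX, e4]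
  have equiv_eq : ∀ τ : PowerSeries k ≃ₐ[k] PowerSeries k, τ X = X * w → τ = σ0 := by
    intro τ hτX
    have hτ0 : constantCoeff (τ.toAlgHom X) = 0 := by
      show constantCoeff (τ X) = 0
      rw [hτX]; exact hgc
    have h1 := eq_substHom τ.toAlgHom hτ0
    have h2 : τ.toAlgHom = substHom (X * w) hgc :=
      h1.trans (substHom_congr hτ0 hgc hτX)
    apply AlgEquiv.ext
    intro f
    exact DFunLike.congr_fun h2 f
  constructor
  · exact ⟨σ0, ⟨hprop1, hprop2⟩, fun τ hτ => equiv_eq τ (keyuniq τ hτ.1 hτ.2)⟩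
  · intro σ hσm hσ2
    have hσX0 : constantCoeff (σ X) = 0 := by
      obtain ⟨h, hh⟩ := hσ2
      have h1 : σ X = X + X ^ 2 * h := by rw [← hh]; ring
      rw [h1, map_add, constantCoeff_X, map_mul, map_pow, constantCoeff_X]
      ring
    have Q : ∀ i : ℕ, ((σ ^ i) X) ^ m * (1 + (i : PowerSeries k) * X ^ m) = X ^ m ∧
        (X : PowerSeries k) ^ 2 ∣ ((σ ^ i) X - X) := by
      intro i
      induction i with
      | zero => constructor <;> simp
      | succ i ih =>
        obtain ⟨ih1, ih2⟩ := ih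
        have hstep : (σ ^ (i + 1)) X = σ ((σ ^ i) X) := by
          rw [pow_succ', AlgEquiv.mul_apply]
        constructor
        · have happ : σ (((σ ^ i) X) ^ m * (1 + (i : PowerSeries k) * X ^ m))
              = σ (X ^ m) := by rw [ih1]
          simp only [map_mul, map_add, map_one, map_pow, map_natCast] at happ
          have e : σ ((σ ^ i) X) ^ m *
              ((1 + (i : PowerSeries k) * (σ X) ^ m) * (1 + X ^ m)) = X ^ m := by
            rw [← mul_assoc, happ, hσm]
          have e2 : (1 + (i : PowerSeries k) * (σ X) ^ m) * (1 + X ^ m)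
              = 1 + ((i : PowerSeries k) + 1) * X ^ m := by
            have l1 : (1 + (i : PowerSeries k) * (σ X) ^ m) * (1 + X ^ m)
                = 1 + X ^ m + (i : PowerSeries k) * ((σ X) ^ m * (1 + X ^ m)) := by ring
            rw [l1, hσm]; ring
          rw [hstep, Nat.cast_add, Nat.cast_one, ← e2]
          exact e
        · rw [hstep]
          obtain ⟨h, hh⟩ := ih2
          have h1 : σ ((σ ^ i) X) - σ X = (σ X) ^ 2 * σ h := by
            rw [← map_sub, hh, map_mul, map_pow]
          have h2 : (X : PowerSeries k) ^ 2 ∣ σ ((σ ^ i) X) - σ X := by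
            rw [h1]
            exact (pow_dvd_pow_of_dvd (X_dvd_iff.mpr hσX0) 2).mul_right _
          have h3 := dvd_add h2 hσ2
          rwa [sub_add_sub_cancel] at h3
    obtain ⟨Qp1, Qp2⟩ := Q p
    have hp0 : ((p : PowerSeries k)) = 0 := CharP.cast_eq_zero (PowerSeries k) p
    rw [hp0, zero_mul, add_zero, mul_one] at Qp1
    have hXp : (σ ^ p) X = X := eq_X_of_pow_eq m hm' _ Qp2 Qp1
    have hσp : σ ^ p = 1 := by
      have h0 : constantCoeff ((σ ^ p).toAlgHom X) = 0 := by
        show constantCoeff ((σ ^ p) X) = 0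
        rw [hXp]; exact constantCoeff_X
      have h1 := eq_substHom (σ ^ p).toAlgHom h0
      have h2 : (σ ^ p).toAlgHom = substHom X constantCoeff_X :=
        h1.trans (substHom_congr h0 constantCoeff_X hXp)
      apply AlgEquiv.ext
      intro f
      have h3 := DFunLike.congr_fun (h2.trans substHom_X_eq_id) f
      simpa using h3
    refine ⟨hσp, ?_⟩
    intro i hi1 hi2
    obtain ⟨Qi1, Qi2⟩ := Q i
    have hip : i < p := lt_of_le_of_lt hi2 (Nat.sub_lt hp.pos one_pos)
    have hik : ((i : k)) ≠ 0 := by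
      intro hc
      have hd := (CharP.cast_eq_zero_iff k p i).mp hc
      have := Nat.le_of_dvd (by omega) hd
      omega
    obtain ⟨h, hh⟩ := Qi2
    have hiX : (σ ^ i) X = X * (1 + X * h) := by
      have h1 : (σ ^ i) X = X + X ^ 2 * h := by rw [← hh]; ring
      rw [h1]; ring
    have hη1 : constantCoeff ((1 : PowerSeries k) + X * h) = 1 := by simp
    have e1 : (X : PowerSeries k) ^ m *
        ((1 + X * h) ^ m * (1 + (i : PowerSeries k) * X ^ m)) = X ^ m * 1 := by
      rw [mul_one]
      calc (X : PowerSeries k) ^ m * ((1 + X * h) ^ m * (1 + (i : PowerSeries k) * X ^ m))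
          = (X * (1 + X * h)) ^ m * (1 + (i : PowerSeries k) * X ^ m) := by
            rw [mul_pow]; ring
      _ = ((σ ^ i) X) ^ m * (1 + (i : PowerSeries k) * X ^ m) := by rw [← hiX]
      _ = X ^ m := Qi1
    have e2 : ((1 : PowerSeries k) + X * h) ^ m * (1 + (i : PowerSeries k) * X ^ m) = 1 :=
      mul_left_cancel₀ (pow_ne_zero m X_ne_zero) e1
    have e3 : (((1 : PowerSeries k) + X * h) ^ m - 1) * (1 + (i : PowerSeries k) * X ^ m)
        = -((i : PowerSeries k) * X ^ m) := by
      have l1 : (((1 : PowerSeries k) + X * h) ^ m - 1) * (1 + (i : PowerSeries k) * X ^ m)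
          = ((1 : PowerSeries k) + X * h) ^ m * (1 + (i : PowerSeries k) * X ^ m)
            - (1 + (i : PowerSeries k) * X ^ m) := by ring
      rw [l1, e2]; ring
    have hgeom := geom_sum₂_mul ((1 : PowerSeries k) + X * h) 1 m
    set S := ∑ j ∈ Finset.range m, ((1 : PowerSeries k) + X * h) ^ j * 1 ^ (m - 1 - j)
      with hSdef
    have hS0 : constantCoeff S = (m : k) := by
      rw [hSdef, map_sum]
      rw [Finset.sum_congr rfl (fun j _ => by
        rw [map_mul, map_pow, map_pow, hη1, one_pow, map_one, one_pow, one_mul])]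
      simp
    have hordS : S.order = 0 := by
      have hne : coeff 0 S ≠ 0 := by
        rw [coeff_zero_eq_constantCoeff]
        intro hc; rw [hc] at hS0; exact hm' hS0.symm
      have hle := PowerSeries.order_le 0 hne
      simpa using hle
    have hordI : ((1 : PowerSeries k) + (i : PowerSeries k) * X ^ m).order = 0 := by
      have hne : coeff 0 ((1 : PowerSeries k) + (i : PowerSeries k) * X ^ m) ≠ 0 := by
        rw [coeff_zero_eq_constantCoeff]
        rw [map_add, map_one, map_mul, hXm0, mul_zero, add_zero]
        exact one_ne_zero
      have hle := PowerSeries.order_le 0 hne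
      simpa using hle
    have hordR : (-((i : PowerSeries k) * X ^ m)).order = (m : ℕ∞) := by
      have l1 : -((i : PowerSeries k) * X ^ m) = C (-(i : k)) * X ^ m := by
        rw [map_neg, map_natCast]; ring
      rw [l1, C_mul_X_pow_eq_monomial, order_monomial]
      simp [neg_eq_zero, hik]
    have hprod : S * (((1 : PowerSeries k) + X * h) - 1) *
        (1 + (i : PowerSeries k) * X ^ m) = -((i : PowerSeries k) * X ^ m) := by
      rw [hgeom, one_pow, e3]
    have hordeq := congrArg PowerSeries.order hprod
    rw [order_mul, order_mul, hordS, hordI, zero_add, add_zero, hordR] at hordeq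
    have hfin : ((σ ^ i) X - X) = X * (((1 : PowerSeries k) + X * h) - 1) := by
      rw [hiX]; ring
    rw [hfin, order_mul, order_X, hordeq, Nat.cast_add, Nat.cast_one, add_comm]
end

section
/- Let k be a field and R := k[[x,y]]/(xy). Let σ be a k-algebra automorphism of R that maps the ideal generated by the class of x into itself and the ideal generated by the class of y into itself (i.e., σ does not permute the branches). Then there exist unique power series P_0 ∈ x·k[[x]] and P_1 ∈ y·k[[y]] such that σ(x̄) = P_0(x̄) and σ(ȳ) = P_1(ȳ) in R, where x̄, ȳ denote the classes of x and y. -/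
/-- The complete local ring `k[[x,y]]/(xy)` of an ordinary double point. -/
abbrev Node (k : Type*) [Field k] : Type _ :=
  MvPowerSeries (Fin 2) k ⧸
    (Ideal.span {(MvPowerSeries.X 0 * MvPowerSeries.X 1 : MvPowerSeries (Fin 2) k)})

/-- The class `x̄` of `x` in `k[[x,y]]/(xy)`. -/
noncomputable def nodeX (k : Type*) [Field k] : Node k :=
  Ideal.Quotient.mk _ (MvPowerSeries.X 0)

/-- The class `ȳ` of `y` in `k[[x,y]]/(xy)`. -/
noncomputable def nodeY (k : Type*) [Field k] : Node k :=
  Ideal.Quotient.mk _ (MvPowerSeries.X 1)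

/-- The embedding `k[[x]] → k[[x,y]]` sending a univariate power series `P` to `P(x)`,
so that the class of `emb0 P` in `k[[x,y]]/(xy)` is the evaluation `P(x̄)`. -/
noncomputable def emb0 {k : Type*} [Field k] (P : PowerSeries k) : MvPowerSeries (Fin 2) k :=
  fun d => if d 1 = 0 then PowerSeries.coeff (d 0) P else 0

/-- The embedding `k[[y]] → k[[x,y]]`, `P ↦ P(y)`. -/
noncomputable def emb1 {k : Type*} [Field k] (P : PowerSeries k) : MvPowerSeries (Fin 2) k :=
  fun d => if d 0 = 0 then PowerSeries.coeff (d 1) P else 0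

/-- Divisibility by `X 0 * X 1` means coefficientwise vanishing on the two axes. -/
lemma XX_dvd_iff {k : Type*} [Field k] (f : MvPowerSeries (Fin 2) k) :
    (MvPowerSeries.X 0 * MvPowerSeries.X 1 : MvPowerSeries (Fin 2) k) ∣ f ↔
      ∀ d : Fin 2 →₀ ℕ, d 0 = 0 ∨ d 1 = 0 → MvPowerSeries.coeff d f = 0 := by
  constructor
  · intro h d hd
    rcases hd with h0 | h1
    · exact MvPowerSeries.X_dvd_iff.mp (dvd_trans (Dvd.intro _ rfl) h) d h0
    · exact MvPowerSeries.X_dvd_iff.mp (dvd_trans (Dvd.intro_left _ rfl) h) d h1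
  · intro h
    obtain ⟨g, hg⟩ : (MvPowerSeries.X 1 : MvPowerSeries (Fin 2) k) ∣ f :=
      MvPowerSeries.X_dvd_iff.mpr (fun m hm => h m (Or.inr hm))
    have hg0 : (MvPowerSeries.X 0 : MvPowerSeries (Fin 2) k) ∣ g := by
      rw [MvPowerSeries.X_dvd_iff]
      intro m hm
      have h2 : MvPowerSeries.coeff (Finsupp.single 1 1 + m) f = 0 := by
        apply h
        left
        simp [Finsupp.single_apply, hm]
      rw [hg, MvPowerSeries.X, MvPowerSeries.coeff_add_monomial_mul] at h2
      simpa using h2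
    obtain ⟨g', hg'⟩ := hg0
    exact ⟨g', by rw [hg, hg']; ring⟩

lemma mem_node_ideal_iff {k : Type*} [Field k] (f : MvPowerSeries (Fin 2) k) :
    f ∈ Ideal.span {(MvPowerSeries.X 0 * MvPowerSeries.X 1 : MvPowerSeries (Fin 2) k)} ↔
      ∀ d : Fin 2 →₀ ℕ, d 0 = 0 ∨ d 1 = 0 → MvPowerSeries.coeff d f = 0 := by
  rw [Ideal.mem_span_singleton]; exact XX_dvd_iff f

lemma single1_apply0 (n : ℕ) : (Finsupp.single (1 : Fin 2) n) 0 = 0 := by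
  simp [Finsupp.single_apply]

lemma single0_apply1 (n : ℕ) : (Finsupp.single (0 : Fin 2) n) 1 = 0 := by
  simp [Finsupp.single_apply]

lemma coeff_emb0 {k : Type*} [Field k] (P : PowerSeries k) (d : Fin 2 →₀ ℕ) :
    MvPowerSeries.coeff d (emb0 P) =
      if d 1 = 0 then PowerSeries.coeff (d 0) P else 0 := rfl

lemma coeff_emb1 {k : Type*} [Field k] (P : PowerSeries k) (d : Fin 2 →₀ ℕ) :
    MvPowerSeries.coeff d (emb1 P) =
      if d 0 = 0 then PowerSeries.coeff (d 1) P else 0 := rfl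

lemma emb0_inj {k : Type*} [Field k] {P P' : PowerSeries k}
    (h : (Ideal.Quotient.mk _ (emb0 P) : Node k) = Ideal.Quotient.mk _ (emb0 P')) :
    P = P' := by
  rw [Ideal.Quotient.eq, mem_node_ideal_iff] at h
  ext n
  have h2 := h (Finsupp.single 0 n) (Or.inr (single0_apply1 n))
  rw [map_sub, coeff_emb0, coeff_emb0, single0_apply1, if_pos rfl, if_pos rfl,
    Finsupp.single_eq_same, sub_eq_zero] at h2
  exact h2

lemma emb1_inj {k : Type*} [Field k] {P P' : PowerSeries k}
    (h : (Ideal.Quotient.mk _ (emb1 P) : Node k) = Ideal.Quotient.mk _ (emb1 P')) :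
    P = P' := by
  rw [Ideal.Quotient.eq, mem_node_ideal_iff] at h
  ext n
  have h2 := h (Finsupp.single 1 n) (Or.inl (single1_apply0 n))
  rw [map_sub, coeff_emb1, coeff_emb1, single1_apply0, if_pos rfl, if_pos rfl,
    Finsupp.single_eq_same, sub_eq_zero] at h2
  exact h2

lemma node_branch0 {k : Type*} [Field k] (a : Node k) (ha : a ∈ Ideal.span {nodeX k}) :
    ∃ P : PowerSeries k, PowerSeries.constantCoeff P = 0 ∧
      a = Ideal.Quotient.mk _ (emb0 P) := by
  obtain ⟨r, hr⟩ := Ideal.mem_span_singleton.mp ha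
  obtain ⟨g, rfl⟩ := Ideal.Quotient.mk_surjective r
  refine ⟨PowerSeries.mk fun n =>
      MvPowerSeries.coeff (Finsupp.single 0 n) (MvPowerSeries.X 0 * g), ?_, ?_⟩
  · have h0 := MvPowerSeries.X_dvd_iff.mp
      (dvd_mul_right (MvPowerSeries.X (0 : Fin 2)) g) 0 rfl
    rw [← PowerSeries.coeff_zero_eq_constantCoeff, PowerSeries.coeff_mk, Finsupp.single_zero]
    exact h0
  · rw [hr, nodeX, ← map_mul, Ideal.Quotient.eq, mem_node_ideal_iff]
    intro d hd
    rw [map_sub, coeff_emb0]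
    by_cases h1 : d 1 = 0
    · rw [if_pos h1, PowerSeries.coeff_mk]
      have hd0 : (Finsupp.single (0 : Fin 2) (d 0)) = d := by
        ext i
        fin_cases i
        · simp
        · simp [Finsupp.single_apply, h1]
      rw [hd0, sub_self]
    · rw [if_neg h1, sub_zero]
      exact MvPowerSeries.X_dvd_iff.mp (dvd_mul_right _ _) d (hd.resolve_right h1)

lemma node_branch1 {k : Type*} [Field k] (a : Node k) (ha : a ∈ Ideal.span {nodeY k}) :
    ∃ P : PowerSeries k, PowerSeries.constantCoeff P = 0 ∧
      a = Ideal.Quotient.mk _ (emb1 P) := by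
  obtain ⟨r, hr⟩ := Ideal.mem_span_singleton.mp ha
  obtain ⟨g, rfl⟩ := Ideal.Quotient.mk_surjective r
  refine ⟨PowerSeries.mk fun n =>
      MvPowerSeries.coeff (Finsupp.single 1 n) (MvPowerSeries.X 1 * g), ?_, ?_⟩
  · have h0 := MvPowerSeries.X_dvd_iff.mp
      (dvd_mul_right (MvPowerSeries.X (1 : Fin 2)) g) 0 rfl
    rw [← PowerSeries.coeff_zero_eq_constantCoeff, PowerSeries.coeff_mk, Finsupp.single_zero]
    exact h0
  · rw [hr, nodeY, ← map_mul, Ideal.Quotient.eq, mem_node_ideal_iff]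
    intro d hd
    rw [map_sub, coeff_emb1]
    by_cases h1 : d 0 = 0
    · rw [if_pos h1, PowerSeries.coeff_mk]
      have hd0 : (Finsupp.single (1 : Fin 2) (d 1)) = d := by
        ext i
        fin_cases i
        · simp [Finsupp.single_apply, h1]
        · simp
      rw [hd0, sub_self]
    · rw [if_neg h1, sub_zero]
      exact MvPowerSeries.X_dvd_iff.mp (dvd_mul_right _ _) d (hd.resolve_left h1)

/-- Let `σ` be a `k`-algebra automorphism of `R = k[[x,y]]/(xy)` mapping the ideal `(x̄)`
into itself and the ideal `(ȳ)` into itself (i.e. not permuting the branches).  Then there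
are unique power series `P₀ ∈ x·k[[x]]` and `P₁ ∈ y·k[[y]]` with `σ(x̄) = P₀(x̄)` and
`σ(ȳ) = P₁(ȳ)`. -/
theorem stmt9 {k : Type*} [Field k] (σ : Node k ≃ₐ[k] Node k)
    (hx : ∀ a ∈ Ideal.span {nodeX k}, σ a ∈ Ideal.span {nodeX k})
    (hy : ∀ a ∈ Ideal.span {nodeY k}, σ a ∈ Ideal.span {nodeY k}) :
    ∃! PQ : PowerSeries k × PowerSeries k,
      PowerSeries.constantCoeff PQ.1 = 0 ∧ PowerSeries.constantCoeff PQ.2 = 0 ∧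
      σ (nodeX k) = Ideal.Quotient.mk _ (emb0 PQ.1) ∧
      σ (nodeY k) = Ideal.Quotient.mk _ (emb1 PQ.2) := by
  obtain ⟨P₀, hP₀c, hP₀⟩ := node_branch0 (σ (nodeX k)) (hx _ (Ideal.subset_span rfl))
  obtain ⟨P₁, hP₁c, hP₁⟩ := node_branch1 (σ (nodeY k)) (hy _ (Ideal.subset_span rfl))
  refine ⟨(P₀, P₁), ⟨hP₀c, hP₁c, hP₀, hP₁⟩, ?_⟩
  rintro ⟨Q₀, Q₁⟩ ⟨-, -, h0, h1⟩
  have e0 : Q₀ = P₀ := emb0_inj (h0.symm.trans hP₀)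
  have e1 : Q₁ = P₁ := emb1_inj (h1.symm.trans hP₁)
  simp [e0, e1]
end

section
/- Let k be a field and R := k[[x,y]]/(xy) with x̄, ȳ the classes of x and y. For every k-derivation D : R → R there exist unique power series f ∈ x·k[[x]] and g ∈ y·k[[y]] such that D(x̄) = f(x̄) and D(ȳ) = g(ȳ); conversely, for every f ∈ x·k[[x]] and g ∈ y·k[[y]] there is a (unique) k-derivation D of R with D(x̄) = f(x̄) and D(ȳ) = g(ȳ). In other words, Der_k(R) is naturally identified with x·k[[x]]·∂x ⊕ y·k[[y]]·∂y. -/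
namespace Stmt10

set_option maxHeartbeats 1000000
set_option synthInstance.maxHeartbeats 400000

variable {k : Type*} [Field k]

abbrev Amv (k : Type*) [Field k] := MvPowerSeries (Fin 2) k

noncomputable abbrev nodeI (k : Type*) [Field k] : Ideal (Amv k) :=
  Ideal.span {(MvPowerSeries.X 0 * MvPowerSeries.X 1 : Amv k)}

/-! ### Finsupp helpers -/

lemma fin2_single0 {d : Fin 2 →₀ ℕ} (h : d 1 = 0) : d = Finsupp.single 0 (d 0) := by
  ext i
  fin_cases i
  · simp
  · simp [Finsupp.single_apply]
    exact h

lemma fin2_single1 {d : Fin 2 →₀ ℕ} (h : d 0 = 0) : d = Finsupp.single 1 (d 1) := by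
  ext i
  fin_cases i
  · simp [Finsupp.single_apply]
    exact h
  · simp

@[simp] lemma single0_apply1 (n : ℕ) : (Finsupp.single (0 : Fin 2) n) 1 = 0 := by
  simp [Finsupp.single_apply]

@[simp] lemma single1_apply0 (n : ℕ) : (Finsupp.single (1 : Fin 2) n) 0 = 0 := by
  simp [Finsupp.single_apply]

/-! ### coefficients of emb0 / emb1 -/

lemma coeff_emb0 (P : PowerSeries k) (d : Fin 2 →₀ ℕ) :
    MvPowerSeries.coeff d (emb0 P) = if d 1 = 0 then PowerSeries.coeff (d 0) P else 0 := rfl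

lemma coeff_emb1 (P : PowerSeries k) (d : Fin 2 →₀ ℕ) :
    MvPowerSeries.coeff d (emb1 P) = if d 0 = 0 then PowerSeries.coeff (d 1) P else 0 := rfl

lemma emb0_zero : emb0 (0 : PowerSeries k) = 0 := by
  apply MvPowerSeries.ext; intro d
  rw [coeff_emb0]
  simp

lemma emb1_zero : emb1 (0 : PowerSeries k) = 0 := by
  apply MvPowerSeries.ext; intro d
  rw [coeff_emb1]
  simp

lemma emb0_add (P Q : PowerSeries k) : emb0 (P + Q) = emb0 P + emb0 Q := by
  apply MvPowerSeries.ext; intro d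
  rw [map_add, coeff_emb0, coeff_emb0, coeff_emb0, map_add]
  split <;> simp

lemma emb1_add (P Q : PowerSeries k) : emb1 (P + Q) = emb1 P + emb1 Q := by
  apply MvPowerSeries.ext; intro d
  rw [map_add, coeff_emb1, coeff_emb1, coeff_emb1, map_add]
  split <;> simp

lemma emb0_C (c : k) : emb0 (PowerSeries.C c) = MvPowerSeries.C (σ := Fin 2) (R := k) c := by
  classical
  apply MvPowerSeries.ext; intro d
  rw [coeff_emb0, MvPowerSeries.coeff_C, PowerSeries.coeff_C]
  by_cases h1 : d 1 = 0
  · by_cases h0 : d 0 = 0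
    · have : d = 0 := by rw [fin2_single0 h1, h0, Finsupp.single_zero]
      simp [h0, h1, this]
    · have : d ≠ 0 := fun h => h0 (by simp [h])
      simp [h0, h1, this]
  · have : d ≠ 0 := fun h => h1 (by simp [h])
    simp [h1, this]

lemma emb1_C (c : k) : emb1 (PowerSeries.C c) = MvPowerSeries.C (σ := Fin 2) (R := k) c := by
  classical
  apply MvPowerSeries.ext; intro d
  rw [coeff_emb1, MvPowerSeries.coeff_C, PowerSeries.coeff_C]
  by_cases h0 : d 0 = 0
  · by_cases h1 : d 1 = 0
    · have : d = 0 := by rw [fin2_single0 h1, h0, Finsupp.single_zero]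
      simp [h0, h1, this]
    · have : d ≠ 0 := fun h => h1 (by simp [h])
      simp [h0, h1, this]
  · have : d ≠ 0 := fun h => h0 (by simp [h])
    simp [h0, this]

lemma emb0_one : emb0 (1 : PowerSeries k) = 1 := by
  have := emb0_C (k := k) 1
  rwa [map_one, map_one] at this

lemma emb1_one : emb1 (1 : PowerSeries k) = 1 := by
  have := emb1_C (k := k) 1
  rwa [map_one, map_one] at this

lemma emb0_X : emb0 (PowerSeries.X : PowerSeries k) = MvPowerSeries.X 0 := by
  classical
  apply MvPowerSeries.ext; intro d
  rw [coeff_emb0, MvPowerSeries.coeff_X, PowerSeries.coeff_X]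
  by_cases h1 : d 1 = 0
  · by_cases h0 : d 0 = 1
    · have : d = Finsupp.single 0 1 := by rw [fin2_single0 h1, h0]
      simp [h0, h1, this]
    · have : d ≠ Finsupp.single 0 1 := by
        intro h; apply h0; rw [h]; simp
      simp [h0, h1, this]
  · have : d ≠ Finsupp.single 0 1 := by
      intro h; apply h1; rw [h]; simp
    simp [h1, this]

lemma emb1_X : emb1 (PowerSeries.X : PowerSeries k) = MvPowerSeries.X 1 := by
  classical
  apply MvPowerSeries.ext; intro d
  rw [coeff_emb1, MvPowerSeries.coeff_X, PowerSeries.coeff_X]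
  by_cases h0 : d 0 = 0
  · by_cases h1 : d 1 = 1
    · have : d = Finsupp.single 1 1 := by rw [fin2_single1 h0, h1]
      simp [h0, h1, this]
    · have : d ≠ Finsupp.single 1 1 := by
        intro h; apply h1; rw [h]; simp
      simp [h0, h1, this]
  · have : d ≠ Finsupp.single 1 1 := by
      intro h; apply h0; rw [h]; simp
    simp [h0, this]

lemma emb0_mul (P Q : PowerSeries k) : emb0 (P * Q) = emb0 P * emb0 Q := by
  classical
  apply MvPowerSeries.ext; intro d
  rw [MvPowerSeries.coeff_mul, coeff_emb0]
  by_cases h1 : d 1 = 0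
  · rw [if_pos h1, PowerSeries.coeff_mul]
    refine Finset.sum_nbij' (i := fun p => (Finsupp.single (0:Fin 2) p.1, Finsupp.single (0:Fin 2) p.2))
      (j := fun p => (p.1 0, p.2 0)) ?_ ?_ ?_ ?_ ?_
    · intro p hp
      rw [Finset.HasAntidiagonal.mem_antidiagonal] at hp
      rw [Finset.HasAntidiagonal.mem_antidiagonal, ← Finsupp.single_add, hp]
      exact (fin2_single0 h1).symm
    · intro p hp
      rw [Finset.HasAntidiagonal.mem_antidiagonal] at hp
      rw [Finset.HasAntidiagonal.mem_antidiagonal]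
      have := congrArg (fun e => e 0) hp
      simpa using this
    · intro p _
      simp
    · intro p hp
      rw [Finset.HasAntidiagonal.mem_antidiagonal] at hp
      have h1' : p.1 1 = 0 ∧ p.2 1 = 0 := by
        have := congrArg (fun e => e 1) hp
        simp [h1] at this
        omega
      have e1 := fin2_single0 h1'.1
      have e2 := fin2_single0 h1'.2
      exact Prod.ext e1.symm e2.symm
    · intro p _
      rw [coeff_emb0, coeff_emb0]
      simp
  · rw [if_neg h1]
    symm
    apply Finset.sum_eq_zero
    intro p hp
    rw [Finset.HasAntidiagonal.mem_antidiagonal] at hp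
    have : p.1 1 ≠ 0 ∨ p.2 1 ≠ 0 := by
      by_contra hc
      push_neg at hc
      apply h1
      have := congrArg (fun e => e 1) hp
      simp [hc.1, hc.2] at this
      omega
    rcases this with h | h
    · rw [coeff_emb0, if_neg h, zero_mul]
    · rw [coeff_emb0 Q, if_neg h, mul_zero]
  

lemma emb1_mul (P Q : PowerSeries k) : emb1 (P * Q) = emb1 P * emb1 Q := by
  classical
  apply MvPowerSeries.ext; intro d
  rw [MvPowerSeries.coeff_mul, coeff_emb1]
  by_cases h0 : d 0 = 0
  · rw [if_pos h0, PowerSeries.coeff_mul]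
    refine Finset.sum_nbij' (i := fun p => (Finsupp.single (1:Fin 2) p.1, Finsupp.single (1:Fin 2) p.2))
      (j := fun p => (p.1 1, p.2 1)) ?_ ?_ ?_ ?_ ?_
    · intro p hp
      rw [Finset.HasAntidiagonal.mem_antidiagonal] at hp
      rw [Finset.HasAntidiagonal.mem_antidiagonal, ← Finsupp.single_add, hp]
      exact (fin2_single1 h0).symm
    · intro p hp
      rw [Finset.HasAntidiagonal.mem_antidiagonal] at hp
      rw [Finset.HasAntidiagonal.mem_antidiagonal]
      have := congrArg (fun e => e 1) hp
      simpa using this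
    · intro p _
      simp
    · intro p hp
      rw [Finset.HasAntidiagonal.mem_antidiagonal] at hp
      have h1' : p.1 0 = 0 ∧ p.2 0 = 0 := by
        have := congrArg (fun e => e 0) hp
        simp [h0] at this
        omega
      have e1 := fin2_single1 h1'.1
      have e2 := fin2_single1 h1'.2
      exact Prod.ext e1.symm e2.symm
    · intro p _
      rw [coeff_emb1, coeff_emb1]
      simp
  · rw [if_neg h0]
    symm
    apply Finset.sum_eq_zero
    intro p hp
    rw [Finset.HasAntidiagonal.mem_antidiagonal] at hp
    have : p.1 0 ≠ 0 ∨ p.2 0 ≠ 0 := by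
      by_contra hc
      push_neg at hc
      apply h0
      have := congrArg (fun e => e 0) hp
      simp [hc.1, hc.2] at this
      omega
    rcases this with h | h
    · rw [coeff_emb1, if_neg h, zero_mul]
    · rw [coeff_emb1 Q, if_neg h, mul_zero]

lemma emb0_sum {ι : Type*} (s : Finset ι) (h : ι → PowerSeries k) :
    emb0 (∑ i ∈ s, h i) = ∑ i ∈ s, emb0 (h i) :=
  map_sum (AddMonoidHom.mk' emb0 emb0_add) h s

lemma emb1_sum {ι : Type*} (s : Finset ι) (h : ι → PowerSeries k) :
    emb1 (∑ i ∈ s, h i) = ∑ i ∈ s, emb1 (h i) :=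
  map_sum (AddMonoidHom.mk' emb1 emb1_add) h s

lemma emb0_pow (P : PowerSeries k) (n : ℕ) : emb0 (P ^ n) = emb0 P ^ n := by
  induction n with
  | zero => simpa using emb0_one
  | succ n ih => rw [pow_succ, pow_succ, emb0_mul, ih]

lemma emb1_pow (P : PowerSeries k) (n : ℕ) : emb1 (P ^ n) = emb1 P ^ n := by
  induction n with
  | zero => simpa using emb1_one
  | succ n ih => rw [pow_succ, pow_succ, emb1_mul, ih]

lemma emb0_sub (P Q : PowerSeries k) : emb0 (P - Q) = emb0 P - emb0 Q :=
  map_sub (AddMonoidHom.mk' emb0 emb0_add) P Q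

lemma emb1_sub (P Q : PowerSeries k) : emb1 (P - Q) = emb1 P - emb1 Q :=
  map_sub (AddMonoidHom.mk' emb1 emb1_add) P Q

/-! ### The ideal (xy) -/

lemma X0X1_eq : (MvPowerSeries.X 0 * MvPowerSeries.X 1 : Amv k)
    = MvPowerSeries.monomial (Finsupp.single 0 1 + Finsupp.single 1 1) 1 := by
  rw [MvPowerSeries.X_def, MvPowerSeries.X_def, MvPowerSeries.monomial_mul_monomial, one_mul]

lemma coeff_eq_zero_of_mem_nodeI {F : Amv k} (hF : F ∈ nodeI k) {d : Fin 2 →₀ ℕ}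
    (hd : d 0 = 0 ∨ d 1 = 0) : MvPowerSeries.coeff d F = 0 := by
  obtain ⟨q, hq⟩ := Ideal.mem_span_singleton'.mp hF
  rw [← hq, X0X1_eq, MvPowerSeries.coeff_mul_monomial]
  rw [if_neg]
  intro hle
  have h0 : 1 ≤ d 0 := by
    have := hle 0
    simpa using this
  have h1 : 1 ≤ d 1 := by
    have := hle 1
    simpa using this
  rcases hd with h | h <;> omega

lemma mem_nodeI_of_coeff {F : Amv k}
    (h : ∀ d : Fin 2 →₀ ℕ, d 0 = 0 ∨ d 1 = 0 → MvPowerSeries.coeff d F = 0) :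
    F ∈ nodeI k := by
  classical
  set e : Fin 2 →₀ ℕ := Finsupp.single 0 1 + Finsupp.single 1 1 with he
  refine Ideal.mem_span_singleton'.mpr ⟨(id (fun d => F (d + e)) : Amv k), ?_⟩
  rw [X0X1_eq]
  apply MvPowerSeries.ext; intro d
  rw [MvPowerSeries.coeff_mul_monomial]
  split
  · next hle =>
      rw [MvPowerSeries.coeff_apply, mul_one]
      show F (d - e + e) = _
      rw [tsub_add_cancel_of_le hle]
      rfl
  · next hle =>
      symm
      apply h
      rw [Finsupp.le_def] at hle
      push_neg at hle
      obtain ⟨i, hi⟩ := hle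
      fin_cases i
      · left
        simp [he, Finsupp.single_apply] at hi
        omega
      · right
        simp [he, Finsupp.single_apply] at hi
        omega


noncomputable abbrev qk (k : Type*) [Field k] : Amv k →+* Node k :=
  Ideal.Quotient.mk (nodeI k)

/-! ### Normal form -/

noncomputable def xpart (F : Amv k) : PowerSeries k :=
  PowerSeries.mk fun n => if n = 0 then 0 else MvPowerSeries.coeff (Finsupp.single 0 n) F

noncomputable def ypart (F : Amv k) : PowerSeries k :=
  PowerSeries.mk fun n => if n = 0 then 0 else MvPowerSeries.coeff (Finsupp.single 1 n) F

lemma repr_mem (F : Amv k) :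
    F - (MvPowerSeries.C (σ := Fin 2) (R := k) (MvPowerSeries.coeff 0 F) + emb0 (xpart F) + emb1 (ypart F))
      ∈ nodeI k := by
  classical
  apply mem_nodeI_of_coeff
  intro d hd
  rw [map_sub, map_add, map_add, MvPowerSeries.coeff_C, coeff_emb0, coeff_emb1]
  rcases hd with h0 | h1
  · by_cases h1 : d 1 = 0
    · have hd0 : d = 0 := by rw [fin2_single0 h1, h0, Finsupp.single_zero]
      subst hd0
      simp [xpart, ypart, PowerSeries.coeff_mk]
    · have hdne : d ≠ 0 := fun h => h1 (by simp [h])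
      rw [if_neg hdne, if_neg h1, if_pos h0]
      rw [ypart, PowerSeries.coeff_mk, if_neg h1, ← fin2_single1 h0]
      ring
  · by_cases h0 : d 0 = 0
    · have hd0 : d = 0 := by rw [fin2_single0 h1, h0, Finsupp.single_zero]
      subst hd0
      simp [xpart, ypart, PowerSeries.coeff_mk]
    · have hdne : d ≠ 0 := fun h => h0 (by simp [h])
      rw [if_neg hdne, if_pos h1, if_neg h0]
      rw [xpart, PowerSeries.coeff_mk, if_neg h0, ← fin2_single0 h1]
      ring

lemma nf_unique {c c' : k} {f g f' g' : PowerSeries k}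
    (hf : PowerSeries.constantCoeff f = 0) (hg : PowerSeries.constantCoeff g = 0)
    (hf' : PowerSeries.constantCoeff f' = 0) (hg' : PowerSeries.constantCoeff g' = 0)
    (h : qk k (MvPowerSeries.C (σ := Fin 2) (R := k) c + emb0 f + emb1 g)
       = qk k (MvPowerSeries.C (σ := Fin 2) (R := k) c' + emb0 f' + emb1 g')) :
    c = c' ∧ f = f' ∧ g = g' := by
  classical
  have hm := Ideal.Quotient.eq.mp h
  constructor
  · -- coefficient at 0
    have := coeff_eq_zero_of_mem_nodeI hm (d := 0) (Or.inl rfl)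
    rw [map_sub, map_add, map_add, map_add, map_add] at this
    rw [MvPowerSeries.coeff_C, MvPowerSeries.coeff_C, if_pos rfl, if_pos rfl] at this
    rw [coeff_emb0, coeff_emb0, coeff_emb1, coeff_emb1] at this
    simp only [Finsupp.coe_zero, Pi.zero_apply, if_pos rfl] at this
    rw [PowerSeries.coeff_zero_eq_constantCoeff_apply, PowerSeries.coeff_zero_eq_constantCoeff_apply,
      PowerSeries.coeff_zero_eq_constantCoeff_apply, PowerSeries.coeff_zero_eq_constantCoeff_apply,
      hf, hg, hf', hg'] at this
    simp only [if_true, add_zero] at this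
    exact sub_eq_zero.mp this
  constructor
  · apply PowerSeries.ext
    intro n
    rcases n with _ | n
    · rw [PowerSeries.coeff_zero_eq_constantCoeff_apply, PowerSeries.coeff_zero_eq_constantCoeff_apply, hf, hf']
    · have hsingle : (Finsupp.single (0 : Fin 2) (n+1)) 1 = 0 := single0_apply1 _
      have := coeff_eq_zero_of_mem_nodeI hm (d := Finsupp.single 0 (n+1)) (Or.inr hsingle)
      rw [map_sub, map_add, map_add, map_add, map_add] at this
      rw [MvPowerSeries.coeff_C, MvPowerSeries.coeff_C] at this
      have hne : (Finsupp.single (0:Fin 2) (n+1)) ≠ 0 := by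
        simp [Finsupp.single_eq_zero]
      rw [if_neg hne, if_neg hne] at this
      rw [coeff_emb0, coeff_emb0, coeff_emb1, coeff_emb1] at this
      rw [if_pos hsingle, if_pos hsingle] at this
      have hne0 : (Finsupp.single (0:Fin 2) (n+1)) 0 ≠ 0 := by simp
      rw [if_neg hne0, if_neg hne0] at this
      simp only [Finsupp.single_eq_same, add_zero, zero_add, zero_sub, add_sub_add_left_eq_sub] at this
      exact sub_eq_zero.mp (by linear_combination this)
  · apply PowerSeries.ext
    intro n
    rcases n with _ | n
    · rw [PowerSeries.coeff_zero_eq_constantCoeff_apply, PowerSeries.coeff_zero_eq_constantCoeff_apply, hg, hg']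
    · have hsingle : (Finsupp.single (1 : Fin 2) (n+1)) 0 = 0 := single1_apply0 _
      have := coeff_eq_zero_of_mem_nodeI hm (d := Finsupp.single 1 (n+1)) (Or.inl hsingle)
      rw [map_sub, map_add, map_add, map_add, map_add] at this
      rw [MvPowerSeries.coeff_C, MvPowerSeries.coeff_C] at this
      have hne : (Finsupp.single (1:Fin 2) (n+1)) ≠ 0 := by
        simp [Finsupp.single_eq_zero]
      rw [if_neg hne, if_neg hne] at this
      rw [coeff_emb0, coeff_emb0, coeff_emb1, coeff_emb1] at this
      rw [if_pos hsingle, if_pos hsingle] at this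
      have hne1 : (Finsupp.single (1:Fin 2) (n+1)) 1 ≠ 0 := by simp
      rw [if_neg hne1, if_neg hne1] at this
      simp only [Finsupp.single_eq_same, add_zero, zero_add, zero_sub, add_sub_add_left_eq_sub] at this
      exact sub_eq_zero.mp (by linear_combination this)

theorem nf (r : Node k) : ∃! t : k × PowerSeries k × PowerSeries k,
    PowerSeries.constantCoeff t.2.1 = 0 ∧ PowerSeries.constantCoeff t.2.2 = 0 ∧
    r = qk k (MvPowerSeries.C (σ := Fin 2) (R := k) t.1 + emb0 t.2.1 + emb1 t.2.2) := by
  obtain ⟨F, rfl⟩ := Ideal.Quotient.mk_surjective r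
  refine ⟨(MvPowerSeries.coeff 0 F, xpart F, ypart F), ⟨?_, ?_, ?_⟩, ?_⟩
  · rw [← PowerSeries.coeff_zero_eq_constantCoeff_apply, xpart, PowerSeries.coeff_mk, if_pos rfl]
  · rw [← PowerSeries.coeff_zero_eq_constantCoeff_apply, ypart, PowerSeries.coeff_mk, if_pos rfl]
  · exact (Ideal.Quotient.eq.mpr (repr_mem F))
  · rintro ⟨c, f, g⟩ ⟨hf, hg, hr⟩
    have hx : PowerSeries.constantCoeff (xpart F) = 0 := by
      rw [← PowerSeries.coeff_zero_eq_constantCoeff_apply, xpart, PowerSeries.coeff_mk, if_pos rfl]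
    have hy : PowerSeries.constantCoeff (ypart F) = 0 := by
      rw [← PowerSeries.coeff_zero_eq_constantCoeff_apply, ypart, PowerSeries.coeff_mk, if_pos rfl]
    have heq := nf_unique hf hg hx hy
      (by rw [← hr]; exact (Ideal.Quotient.eq.mpr (repr_mem F)))
    exact Prod.ext heq.1 (Prod.ext heq.2.1 heq.2.2)

noncomputable def nfc (r : Node k) : k := (nf r).choose.1
noncomputable def nff (r : Node k) : PowerSeries k := (nf r).choose.2.1
noncomputable def nfg (r : Node k) : PowerSeries k := (nf r).choose.2.2

lemma nff_const (r : Node k) : PowerSeries.constantCoeff (nff r) = 0 :=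
  (nf r).choose_spec.1.1

lemma nfg_const (r : Node k) : PowerSeries.constantCoeff (nfg r) = 0 :=
  (nf r).choose_spec.1.2.1

lemma nf_eq (r : Node k) :
    r = qk k (MvPowerSeries.C (σ := Fin 2) (R := k) (nfc r) + emb0 (nff r) + emb1 (nfg r)) :=
  (nf r).choose_spec.1.2.2

lemma nf_parts {r : Node k} {c : k} {f g : PowerSeries k}
    (hf : PowerSeries.constantCoeff f = 0) (hg : PowerSeries.constantCoeff g = 0)
    (h : r = qk k (MvPowerSeries.C (σ := Fin 2) (R := k) c + emb0 f + emb1 g)) :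
    nfc r = c ∧ nff r = f ∧ nfg r = g := by
  have := (nf r).choose_spec.2 (c, f, g) ⟨hf, hg, h⟩
  refine ⟨?_, ?_, ?_⟩
  · rw [nfc, ← this]
  · rw [nff, ← this]
  · rw [nfg, ← this]


/-! ### Algebra in the quotient -/

lemma qk_emb0_mul_emb1 {f g : PowerSeries k}
    (hf : PowerSeries.constantCoeff f = 0) (hg : PowerSeries.constantCoeff g = 0) :
    qk k (emb0 f * emb1 g) = 0 := by
  obtain ⟨u, hu⟩ := PowerSeries.X_dvd_iff.mpr hf
  obtain ⟨v, hv⟩ := PowerSeries.X_dvd_iff.mpr hg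
  rw [hu, hv, emb0_mul, emb1_mul, emb0_X, emb1_X]
  rw [Ideal.Quotient.eq_zero_iff_mem]
  exact Ideal.mem_span_singleton'.mpr ⟨emb0 u * emb1 v, by ring⟩

lemma qk_mul_nf (c c' : k) (f f' g g' : PowerSeries k)
    (hf : PowerSeries.constantCoeff f = 0) (hg : PowerSeries.constantCoeff g = 0)
    (hf' : PowerSeries.constantCoeff f' = 0) (hg' : PowerSeries.constantCoeff g' = 0) :
    qk k (MvPowerSeries.C (σ := Fin 2) (R := k) c + emb0 f + emb1 g)
      * qk k (MvPowerSeries.C (σ := Fin 2) (R := k) c' + emb0 f' + emb1 g')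
    = qk k (MvPowerSeries.C (σ := Fin 2) (R := k) (c * c')
        + emb0 (PowerSeries.C c * f' + PowerSeries.C c' * f + f * f')
        + emb1 (PowerSeries.C c * g' + PowerSeries.C c' * g + g * g')) := by
  rw [← map_mul]
  have key : (MvPowerSeries.C (σ := Fin 2) (R := k) c + emb0 f + emb1 g)
      * (MvPowerSeries.C (σ := Fin 2) (R := k) c' + emb0 f' + emb1 g')
    = (MvPowerSeries.C (σ := Fin 2) (R := k) (c * c')
        + emb0 (PowerSeries.C c * f' + PowerSeries.C c' * f + f * f')
        + emb1 (PowerSeries.C c * g' + PowerSeries.C c' * g + g * g'))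
      + (emb0 f * emb1 g' + emb0 f' * emb1 g) := by
    simp only [emb0_add, emb1_add, emb0_mul, emb1_mul, emb0_C, emb1_C, map_mul]
    ring
  rw [key]
  simp only [map_add, qk_emb0_mul_emb1 hf hg', qk_emb0_mul_emb1 hf' hg, add_zero]

lemma nodeX_nf : nodeX k = qk k (MvPowerSeries.C (σ := Fin 2) (R := k) 0
    + emb0 (PowerSeries.X : PowerSeries k) + emb1 0) := by
  rw [emb0_X, emb1_zero, map_zero, add_zero, zero_add]
  rfl

lemma nodeY_nf : nodeY k = qk k (MvPowerSeries.C (σ := Fin 2) (R := k) 0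
    + emb0 (0 : PowerSeries k) + emb1 PowerSeries.X) := by
  rw [emb1_X, emb0_zero, map_zero, add_zero, zero_add]
  rfl

lemma algebraMap_nf (a : k) : algebraMap k (Node k) a
    = qk k (MvPowerSeries.C (σ := Fin 2) (R := k) a + emb0 0 + emb1 0) := by
  rw [emb0_zero, emb1_zero, add_zero, add_zero]
  have h1 : algebraMap k (Node k) a = qk k (algebraMap k (Amv k) a) := rfl
  rw [h1, MvPowerSeries.algebraMap_apply]
  norm_num

lemma nodeX_parts : nfc (nodeX k) = 0 ∧ nff (nodeX k) = PowerSeries.X ∧ nfg (nodeX k) = 0 :=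
  nf_parts (by simp) (by simp) nodeX_nf

lemma nodeY_parts : nfc (nodeY k) = 0 ∧ nff (nodeY k) = 0 ∧ nfg (nodeY k) = PowerSeries.X :=
  nf_parts (by simp) (by simp) nodeY_nf

lemma mul_parts (r s : Node k) :
    nfc (r * s) = nfc r * nfc s ∧
    nff (r * s) = PowerSeries.C (nfc r) * nff s + PowerSeries.C (nfc s) * nff r
      + nff r * nff s ∧
    nfg (r * s) = PowerSeries.C (nfc r) * nfg s + PowerSeries.C (nfc s) * nfg r
      + nfg r * nfg s := by
  have h : r * s = qk k (MvPowerSeries.C (σ := Fin 2) (R := k) (nfc r * nfc s)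
      + emb0 (PowerSeries.C (nfc r) * nff s + PowerSeries.C (nfc s) * nff r + nff r * nff s)
      + emb1 (PowerSeries.C (nfc r) * nfg s + PowerSeries.C (nfc s) * nfg r
        + nfg r * nfg s)) := by
    conv_lhs => rw [nf_eq r, nf_eq s]
    exact qk_mul_nf _ _ _ _ _ _ (nff_const r) (nfg_const r) (nff_const s) (nfg_const s)
  exact nf_parts (by simp [nff_const r, nff_const s]) (by simp [nfg_const r, nfg_const s]) h

lemma add_parts (r s : Node k) :
    nfc (r + s) = nfc r + nfc s ∧ nff (r + s) = nff r + nff s ∧ nfg (r + s) = nfg r + nfg s := by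
  have h : r + s = qk k (MvPowerSeries.C (σ := Fin 2) (R := k) (nfc r + nfc s)
      + emb0 (nff r + nff s) + emb1 (nfg r + nfg s)) := by
    conv_lhs => rw [nf_eq r, nf_eq s]
    rw [← map_add, emb0_add, emb1_add, map_add (MvPowerSeries.C (σ := Fin 2) (R := k))]
    ring_nf
  exact nf_parts (by simp [nff_const r, nff_const s]) (by simp [nfg_const r, nfg_const s]) h

lemma algebraMap_parts (a : k) :
    nfc (algebraMap k (Node k) a) = a ∧ nff (algebraMap k (Node k) a) = 0 ∧
      nfg (algebraMap k (Node k) a) = 0 :=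
  nf_parts (by simp) (by simp) (algebraMap_nf a)

lemma smul_parts (a : k) (r : Node k) :
    nfc (a • r) = a * nfc r ∧ nff (a • r) = PowerSeries.C a * nff r ∧
      nfg (a • r) = PowerSeries.C a * nfg r := by
  rw [show a • r = algebraMap k (Node k) a * r from Algebra.smul_def a r]
  have hm := mul_parts (algebraMap k (Node k) a) r
  have ha := algebraMap_parts (k := k) a
  refine ⟨?_, ?_, ?_⟩
  · rw [hm.1, ha.1]
  · rw [hm.2.1, ha.1, ha.2.1]
    simp
  · rw [hm.2.2, ha.1, ha.2.2]
    simp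

lemma one_parts : nfc (1 : Node k) = 1 ∧ nff (1 : Node k) = 0 ∧ nfg (1 : Node k) = 0 := by
  have : (1 : Node k) = qk k (MvPowerSeries.C (σ := Fin 2) (R := k) 1 + emb0 0 + emb1 0) := by
    rw [emb0_zero, emb1_zero, add_zero, add_zero, map_one, map_one]
  exact nf_parts (by simp) (by simp) this


/-! ### Construction of the derivation -/

lemma qk_C (a : k) : qk k (MvPowerSeries.C (σ := Fin 2) (R := k) a) = algebraMap k (Node k) a := by
  have := algebraMap_nf (k := k) a
  rw [emb0_zero, emb1_zero, add_zero, add_zero] at this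
  exact this.symm

lemma qk_C_mul (a : k) (W : Amv k) :
    qk k (MvPowerSeries.C (σ := Fin 2) (R := k) a * W) = a • qk k W := by
  rw [map_mul, qk_C, ← Algebra.smul_def]

lemma derivFun_zero : (0 : PowerSeries k).derivativeFun = 0 := by
  exact (PowerSeries.derivative k).map_zero

lemma derivFun_X : (PowerSeries.X : PowerSeries k).derivativeFun = 1 := by
  apply PowerSeries.ext
  intro n
  show PowerSeries.coeff n (PowerSeries.derivative k PowerSeries.X) = _
  rw [PowerSeries.coeff_derivative, PowerSeries.coeff_X, PowerSeries.coeff_one]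
  rcases n with _ | n <;> simp

lemma derivC (a : k) (h : PowerSeries k) :
    (PowerSeries.C a * h).derivativeFun = PowerSeries.C a * h.derivativeFun := by
  have hC : (PowerSeries.C a : PowerSeries k).derivativeFun = 0 := PowerSeries.derivative_C
  rw [PowerSeries.derivativeFun_mul, hC, smul_zero, add_zero,
    smul_eq_mul]

lemma mul_qk_nf (t : Node k) {p q : PowerSeries k}
    (hp : PowerSeries.constantCoeff p = 0) (hq : PowerSeries.constantCoeff q = 0) :
    t * qk k (emb0 p + emb1 q)
    = qk k (MvPowerSeries.C (σ := Fin 2) (R := k) 0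
        + emb0 (PowerSeries.C (nfc t) * p + PowerSeries.C 0 * nff t + nff t * p)
        + emb1 (PowerSeries.C (nfc t) * q + PowerSeries.C 0 * nfg t + nfg t * q)) := by
  have h2 : qk k (emb0 p + emb1 q)
      = qk k (MvPowerSeries.C (σ := Fin 2) (R := k) 0 + emb0 p + emb1 q) := by
    rw [map_zero, zero_add]
  conv_lhs => rw [nf_eq t]
  rw [h2, qk_mul_nf _ _ _ _ _ _ (nff_const t) (nfg_const t) hp hq, mul_zero]

noncomputable def Dder (f g : PowerSeries k) (hf : PowerSeries.constantCoeff f = 0)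
    (hg : PowerSeries.constantCoeff g = 0) : Derivation k (Node k) (Node k) where
  toFun r := qk k (emb0 (f * (nff r).derivativeFun) + emb1 (g * (nfg r).derivativeFun))
  map_add' r s := by
    rw [(add_parts r s).2.1, (add_parts r s).2.2, PowerSeries.derivativeFun_add,
      PowerSeries.derivativeFun_add, mul_add, mul_add, emb0_add, emb1_add]
    simp only [map_add]
    ring
  map_smul' a r := by
    rw [(smul_parts a r).2.1, (smul_parts a r).2.2, derivC, derivC,
      mul_left_comm f, mul_left_comm g, emb0_mul, emb0_C, emb1_mul, emb1_C, ← mul_add,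
      qk_C_mul]
    rfl
  map_one_eq_zero' := by
    show qk k (emb0 (f * (nff (1 : Node k)).derivativeFun)
      + emb1 (g * (nfg (1 : Node k)).derivativeFun)) = 0
    rw [one_parts.2.1, one_parts.2.2, derivFun_zero]
    simp [emb0_zero, emb1_zero]
  leibniz' r s := by
    show qk k (emb0 (f * (nff (r * s)).derivativeFun) + emb1 (g * (nfg (r * s)).derivativeFun))
      = r • qk k (emb0 (f * (nff s).derivativeFun) + emb1 (g * (nfg s).derivativeFun))
      + s • qk k (emb0 (f * (nff r).derivativeFun) + emb1 (g * (nfg r).derivativeFun))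
    rw [smul_eq_mul, smul_eq_mul]
    have hfs' : PowerSeries.constantCoeff (f * (nff s).derivativeFun) = 0 := by
      rw [map_mul, hf, zero_mul]
    have hgs' : PowerSeries.constantCoeff (g * (nfg s).derivativeFun) = 0 := by
      rw [map_mul, hg, zero_mul]
    have hfr' : PowerSeries.constantCoeff (f * (nff r).derivativeFun) = 0 := by
      rw [map_mul, hf, zero_mul]
    have hgr' : PowerSeries.constantCoeff (g * (nfg r).derivativeFun) = 0 := by
      rw [map_mul, hg, zero_mul]
    rw [mul_qk_nf r hfs' hgs', mul_qk_nf s hfr' hgr']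
    rw [(mul_parts r s).2.1, (mul_parts r s).2.2]
    rw [← map_add]
    congr 1
    have hF : f * (PowerSeries.C (nfc r) * nff s + PowerSeries.C (nfc s) * nff r
        + nff r * nff s).derivativeFun
      = (PowerSeries.C (nfc r) * (f * (nff s).derivativeFun)
          + PowerSeries.C 0 * nff r + nff r * (f * (nff s).derivativeFun))
        + (PowerSeries.C (nfc s) * (f * (nff r).derivativeFun)
          + PowerSeries.C 0 * nff s + nff s * (f * (nff r).derivativeFun)) := by
      rw [PowerSeries.derivativeFun_add, PowerSeries.derivativeFun_add, derivC, derivC,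
        PowerSeries.derivativeFun_mul, smul_eq_mul, smul_eq_mul, map_zero]
      ring
    have hG : g * (PowerSeries.C (nfc r) * nfg s + PowerSeries.C (nfc s) * nfg r
        + nfg r * nfg s).derivativeFun
      = (PowerSeries.C (nfc r) * (g * (nfg s).derivativeFun)
          + PowerSeries.C 0 * nfg r + nfg r * (g * (nfg s).derivativeFun))
        + (PowerSeries.C (nfc s) * (g * (nfg r).derivativeFun)
          + PowerSeries.C 0 * nfg s + nfg s * (g * (nfg r).derivativeFun)) := by
      rw [PowerSeries.derivativeFun_add, PowerSeries.derivativeFun_add, derivC, derivC,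
        PowerSeries.derivativeFun_mul, smul_eq_mul, smul_eq_mul, map_zero]
      ring
    rw [hF, hG, emb0_add, emb1_add]
    simp only [map_zero]
    ring

lemma Dder_apply (f g : PowerSeries k) (hf : PowerSeries.constantCoeff f = 0)
    (hg : PowerSeries.constantCoeff g = 0) (r : Node k) :
    Dder f g hf hg r = qk k (emb0 (f * (nff r).derivativeFun)
      + emb1 (g * (nfg r).derivativeFun)) := rfl

lemma Dder_X (f g : PowerSeries k) (hf : PowerSeries.constantCoeff f = 0)
    (hg : PowerSeries.constantCoeff g = 0) :
    Dder f g hf hg (nodeX k) = qk k (emb0 f) := by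
  rw [Dder_apply, nodeX_parts.2.1, nodeX_parts.2.2, derivFun_X, derivFun_zero, mul_one,
    mul_zero, emb1_zero, add_zero]

lemma Dder_Y (f g : PowerSeries k) (hf : PowerSeries.constantCoeff f = 0)
    (hg : PowerSeries.constantCoeff g = 0) :
    Dder f g hf hg (nodeY k) = qk k (emb1 g) := by
  rw [Dder_apply, nodeY_parts.2.1, nodeY_parts.2.2, derivFun_X, derivFun_zero, mul_one,
    mul_zero, emb0_zero, zero_add]


/-! ### Uniqueness of the derivation -/

lemma qk_X0 : qk k (MvPowerSeries.X 0) = nodeX k := rfl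
lemma qk_X1 : qk k (MvPowerSeries.X 1) = nodeY k := rfl

lemma constCoeff_Xpow (n : ℕ) :
    PowerSeries.constantCoeff (PowerSeries.X ^ (n+1) : PowerSeries k) = 0 := by
  rw [map_pow, PowerSeries.constantCoeff_X, zero_pow (Nat.succ_ne_zero n)]

lemma span_pow_nf {z : Node k} {n : ℕ}
    (hz : z ∈ Ideal.span {(nodeX k)^(n+1), (nodeY k)^(n+1)}) :
    nfc z = 0 ∧ (PowerSeries.X^(n+1) ∣ nff z) ∧ (PowerSeries.X^(n+1) ∣ nfg z) := by
  obtain ⟨u, v, huv⟩ := Ideal.mem_span_pair.mp hz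
  have hXp := constCoeff_Xpow (k := k) n
  have hx : (nodeX k)^(n+1) = qk k (emb0 (PowerSeries.X^(n+1)) + emb1 0) := by
    rw [emb1_zero, add_zero, emb0_pow, emb0_X, map_pow, qk_X0]
  have hy : (nodeY k)^(n+1) = qk k (emb0 0 + emb1 (PowerSeries.X^(n+1))) := by
    rw [emb0_zero, zero_add, emb1_pow, emb1_X, map_pow, qk_X1]
  have h1 := mul_qk_nf u (p := PowerSeries.X^(n+1)) (q := (0 : PowerSeries k)) hXp (map_zero _)
  have h2 := mul_qk_nf v (p := (0 : PowerSeries k)) (q := PowerSeries.X^(n+1)) (map_zero _) hXp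
  have hz' : z = qk k (MvPowerSeries.C (σ := Fin 2) (R := k) 0
      + emb0 ((PowerSeries.C (nfc u) + nff u) * PowerSeries.X^(n+1))
      + emb1 ((PowerSeries.C (nfc v) + nfg v) * PowerSeries.X^(n+1))) := by
    rw [← huv, hx, hy, h1, h2, ← map_add]
    congr 1
    simp only [map_zero, zero_mul, mul_zero, add_zero, zero_add, add_mul, emb0_add, emb1_add,
      emb0_zero, emb1_zero]
    try ring
  have hcA : PowerSeries.constantCoeff
      ((PowerSeries.C (nfc u) + nff u) * PowerSeries.X^(n+1)) = 0 := by
    rw [map_mul, hXp, mul_zero]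
  have hcB : PowerSeries.constantCoeff
      ((PowerSeries.C (nfc v) + nfg v) * PowerSeries.X^(n+1)) = 0 := by
    rw [map_mul, hXp, mul_zero]
  obtain ⟨e1, e2, e3⟩ := nf_parts hcA hcB hz'
  exact ⟨e1, ⟨_, e2.symm ▸ (mul_comm _ _)⟩, ⟨_, e3.symm ▸ (mul_comm _ _)⟩⟩

lemma exists_decomp (r : Node k) (n : ℕ) :
    ∃ p ∈ Algebra.adjoin k ({nodeX k, nodeY k} : Set (Node k)),
      r - p ∈ Ideal.span {(nodeX k)^(n+1), (nodeY k)^(n+1)} := by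
  classical
  set T : PowerSeries k := ∑ i ∈ Finset.range (n+1),
    PowerSeries.C (PowerSeries.coeff i (nff r)) * PowerSeries.X^i with hT
  set U : PowerSeries k := ∑ i ∈ Finset.range (n+1),
    PowerSeries.C (PowerSeries.coeff i (nfg r)) * PowerSeries.X^i with hU
  set p : Node k := algebraMap k (Node k) (nfc r)
    + ∑ i ∈ Finset.range (n+1), PowerSeries.coeff i (nff r) • (nodeX k)^i
    + ∑ i ∈ Finset.range (n+1), PowerSeries.coeff i (nfg r) • (nodeY k)^i with hp
  have hmem : p ∈ Algebra.adjoin k ({nodeX k, nodeY k} : Set (Node k)) := by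
    have hxm : nodeX k ∈ Algebra.adjoin k ({nodeX k, nodeY k} : Set (Node k)) :=
      Algebra.subset_adjoin (Set.mem_insert _ _)
    have hym : nodeY k ∈ Algebra.adjoin k ({nodeX k, nodeY k} : Set (Node k)) :=
      Algebra.subset_adjoin (Set.mem_insert_of_mem _ rfl)
    refine add_mem (add_mem (Subalgebra.algebraMap_mem _ _) ?_) ?_
    · exact Subalgebra.sum_mem _ fun i _ => Subalgebra.smul_mem _ (pow_mem hxm i) _
    · exact Subalgebra.sum_mem _ fun i _ => Subalgebra.smul_mem _ (pow_mem hym i) _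
  have hsmulX : ∀ (a : k) (i : ℕ), a • (nodeX k)^i = qk k (emb0 (PowerSeries.C a * PowerSeries.X^i)) := by
    intro a i
    rw [emb0_mul, emb0_C, emb0_pow, emb0_X, map_mul, map_pow, qk_X0, qk_C, ← Algebra.smul_def]
  have hsmulY : ∀ (a : k) (i : ℕ), a • (nodeY k)^i = qk k (emb1 (PowerSeries.C a * PowerSeries.X^i)) := by
    intro a i
    rw [emb1_mul, emb1_C, emb1_pow, emb1_X, map_mul, map_pow, qk_X1, qk_C, ← Algebra.smul_def]
  have hpq : p = qk k (MvPowerSeries.C (σ := Fin 2) (R := k) (nfc r) + emb0 T + emb1 U) := by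
    rw [hp, hT, hU, map_add, map_add, emb0_sum, emb1_sum, map_sum, map_sum, qk_C]
    congr 1
    · congr 1
      exact Finset.sum_congr rfl fun i _ => hsmulX _ i
    · exact Finset.sum_congr rfl fun i _ => hsmulY _ i
  have hrp : qk k (emb0 (nff r - T) + emb1 (nfg r - U)) = r - p := by
    rw [emb0_sub, emb1_sub, hpq]
    rw [show emb0 (nff r) - emb0 T + (emb1 (nfg r) - emb1 U)
        = (MvPowerSeries.C (σ := Fin 2) (R := k) (nfc r) + emb0 (nff r) + emb1 (nfg r))
          - (MvPowerSeries.C (σ := Fin 2) (R := k) (nfc r) + emb0 T + emb1 U) from by ring]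
    rw [map_sub, ← nf_eq r]
  have hdvdT : PowerSeries.X^(n+1) ∣ (nff r - T) := by
    rw [PowerSeries.X_pow_dvd_iff]
    intro m hm
    rw [map_sub, hT, map_sum]
    rw [Finset.sum_congr rfl (fun i (_ : i ∈ Finset.range (n+1)) => by
      rw [PowerSeries.coeff_C_mul, PowerSeries.coeff_X_pow])]
    simp only [mul_ite, mul_one, mul_zero]
    rw [Finset.sum_ite_eq (Finset.range (n+1)) m]
    simp [Finset.mem_range.mpr hm]
  have hdvdU : PowerSeries.X^(n+1) ∣ (nfg r - U) := by
    rw [PowerSeries.X_pow_dvd_iff]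
    intro m hm
    rw [map_sub, hU, map_sum]
    rw [Finset.sum_congr rfl (fun i (_ : i ∈ Finset.range (n+1)) => by
      rw [PowerSeries.coeff_C_mul, PowerSeries.coeff_X_pow])]
    simp only [mul_ite, mul_one, mul_zero]
    rw [Finset.sum_ite_eq (Finset.range (n+1)) m]
    simp [Finset.mem_range.mpr hm]
  refine ⟨p, hmem, ?_⟩
  obtain ⟨w1, hw1⟩ := hdvdT
  obtain ⟨w2, hw2⟩ := hdvdU
  rw [← hrp, hw1, hw2, map_add]
  apply Ideal.add_mem
  · have : qk k (emb0 (PowerSeries.X^(n+1) * w1)) = (nodeX k)^(n+1) * qk k (emb0 w1) := by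
      rw [emb0_mul, emb0_pow, emb0_X, map_mul, map_pow, qk_X0]
    rw [this]
    exact Ideal.mul_mem_right _ _ (Ideal.subset_span (Set.mem_insert _ _))
  · have : qk k (emb1 (PowerSeries.X^(n+1) * w2)) = (nodeY k)^(n+1) * qk k (emb1 w2) := by
      rw [emb1_mul, emb1_pow, emb1_X, map_mul, map_pow, qk_X1]
    rw [this]
    exact Ideal.mul_mem_right _ _ (Ideal.subset_span (Set.mem_insert_of_mem _ rfl))

lemma derivation_unique (D1 D2 : Derivation k (Node k) (Node k))
    (hx : D1 (nodeX k) = D2 (nodeX k)) (hy : D1 (nodeY k) = D2 (nodeY k)) : D1 = D2 := by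
  apply Derivation.ext
  intro r
  rw [← sub_eq_zero]
  have hEx : (D1 - D2) (nodeX k) = 0 := by
    rw [Derivation.sub_apply, hx, sub_self]
  have hEy : (D1 - D2) (nodeY k) = 0 := by
    rw [Derivation.sub_apply, hy, sub_self]
  set E : Derivation k (Node k) (Node k) := D1 - D2 with hE
  have hJn : ∀ n : ℕ, E r ∈ Ideal.span {(nodeX k)^(n+1), (nodeY k)^(n+1)} := by
    intro n
    obtain ⟨p, hpmem, hrp⟩ := exists_decomp r n
    have hEp : E p = 0 := by
      have h0 : Set.EqOn E (0 : Derivation k (Node k) (Node k)) {nodeX k, nodeY k} := by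
        rintro z (rfl | rfl)
        · simpa using hEx
        · simpa using hEy
      simpa using Derivation.eqOn_adjoin h0 hpmem
    have hEr : E r = E (r - p) := by
      rw [map_sub, hEp, sub_zero]
    rw [hEr]
    obtain ⟨u, v, huv⟩ := Ideal.mem_span_pair.mp hrp
    rw [← huv, map_add]
    apply Ideal.add_mem
    · rw [Derivation.leibniz, Derivation.leibniz_pow, hEx, smul_zero, smul_zero, smul_zero,
        zero_add, smul_eq_mul]
      exact Ideal.mul_mem_right _ _ (Ideal.subset_span (Set.mem_insert _ _))
    · rw [Derivation.leibniz, Derivation.leibniz_pow, hEy, smul_zero, smul_zero, smul_zero,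
        zero_add, smul_eq_mul]
      exact Ideal.mul_mem_right _ _ (Ideal.subset_span (Set.mem_insert_of_mem _ rfl))
  have hc : nfc (E r) = 0 := (span_pow_nf (hJn 0)).1
  have hff : nff (E r) = 0 := by
    apply PowerSeries.ext
    intro m
    rw [map_zero]
    exact PowerSeries.X_pow_dvd_iff.mp ((span_pow_nf (hJn m)).2.1) m (Nat.lt_succ_self m)
  have hgg : nfg (E r) = 0 := by
    apply PowerSeries.ext
    intro m
    rw [map_zero]
    exact PowerSeries.X_pow_dvd_iff.mp ((span_pow_nf (hJn m)).2.2) m (Nat.lt_succ_self m)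
  have := nf_eq (E r)
  rw [hc, hff, hgg, emb0_zero, emb1_zero, map_zero] at this
  simpa [hE] using this


/-! ### Part 1 -/

lemma nodeX_mul_nodeY : nodeX k * nodeY k = 0 := by
  show qk k (MvPowerSeries.X 0) * qk k (MvPowerSeries.X 1) = 0
  rw [← map_mul, Ideal.Quotient.eq_zero_iff_mem]
  exact Ideal.subset_span rfl

lemma part1 (D : Derivation k (Node k) (Node k)) :
    ∃! FG : PowerSeries k × PowerSeries k,
      PowerSeries.constantCoeff FG.1 = 0 ∧ PowerSeries.constantCoeff FG.2 = 0 ∧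
      D (nodeX k) = qk k (emb0 FG.1) ∧ D (nodeY k) = qk k (emb1 FG.2) := by
  have hXne : (PowerSeries.X : PowerSeries k) ≠ 0 := PowerSeries.X_ne_zero
  set a := D (nodeX k) with ha
  set b := D (nodeY k) with hb
  have hxy : nodeX k * b + nodeY k * a = 0 := by
    have h0 : D (nodeX k * nodeY k) = 0 := by rw [nodeX_mul_nodeY, map_zero]
    rwa [Derivation.leibniz, smul_eq_mul, smul_eq_mul, ← ha, ← hb] at h0
  have hxb : nodeX k * b = qk k (MvPowerSeries.C (σ := Fin 2) (R := k) 0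
      + emb0 ((PowerSeries.C (nfc b) + nff b) * PowerSeries.X) + emb1 0) := by
    conv_lhs => rw [nodeX_nf, nf_eq b]
    rw [qk_mul_nf _ _ _ _ _ _ (by simp) (by simp) (nff_const b) (nfg_const b)]
    congr 1
    simp only [map_zero, zero_mul, mul_zero, add_zero, zero_add, add_mul, emb0_add, emb1_add,
      emb0_zero, emb1_zero]
    ring
  have hya : nodeY k * a = qk k (MvPowerSeries.C (σ := Fin 2) (R := k) 0
      + emb0 0 + emb1 ((PowerSeries.C (nfc a) + nfg a) * PowerSeries.X)) := by
    conv_lhs => rw [nodeY_nf, nf_eq a]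
    rw [qk_mul_nf _ _ _ _ _ _ (by simp) (by simp) (nff_const a) (nfg_const a)]
    congr 1
    simp only [map_zero, zero_mul, mul_zero, add_zero, zero_add, add_mul, emb0_add, emb1_add,
      emb0_zero, emb1_zero]
    ring
  have hsum : qk k (MvPowerSeries.C (σ := Fin 2) (R := k) 0
      + emb0 ((PowerSeries.C (nfc b) + nff b) * PowerSeries.X)
      + emb1 ((PowerSeries.C (nfc a) + nfg a) * PowerSeries.X))
      = qk k (MvPowerSeries.C (σ := Fin 2) (R := k) 0 + emb0 0 + emb1 0) := by
    rw [emb0_zero, emb1_zero, map_zero, add_zero, add_zero, map_zero]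
    rw [← hxy, hxb, hya, ← map_add]
    congr 1
    simp only [map_zero, emb0_zero, emb1_zero]
    ring
  have hCb : PowerSeries.constantCoeff ((PowerSeries.C (nfc b) + nff b) * PowerSeries.X) = 0 := by
    rw [map_mul, PowerSeries.constantCoeff_X, mul_zero]
  have hCa : PowerSeries.constantCoeff ((PowerSeries.C (nfc a) + nfg a) * PowerSeries.X) = 0 := by
    rw [map_mul, PowerSeries.constantCoeff_X, mul_zero]
  obtain ⟨-, h1, h2⟩ := nf_unique hCb hCa (by simp) (by simp) hsum
  have hfb : PowerSeries.C (nfc b) + nff b = 0 :=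
    (mul_eq_zero.mp h1).resolve_right hXne
  have hga : PowerSeries.C (nfc a) + nfg a = 0 :=
    (mul_eq_zero.mp h2).resolve_right hXne
  have hncb : nfc b = 0 := by
    have := congrArg (PowerSeries.constantCoeff) hfb
    simpa [nff_const b] using this
  have hnga : nfg a = 0 := by
    have : nfg a = -PowerSeries.C (nfc a) := by linear_combination hga
    have hnca : nfc a = 0 := by
      have h3 := congrArg (PowerSeries.constantCoeff) hga
      simpa [nfg_const a] using h3
    rw [this, hnca, map_zero, neg_zero]
  have hnca : nfc a = 0 := by
    have h3 := congrArg (PowerSeries.constantCoeff) hga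
    simpa [nfg_const a] using h3
  have hnfb : nff b = 0 := by
    have : nff b = -PowerSeries.C (nfc b) := by linear_combination hfb
    rw [this, hncb, map_zero, neg_zero]
  have haval : a = qk k (emb0 (nff a)) := by
    have := nf_eq a
    rwa [hnca, hnga, emb1_zero, map_zero, add_zero, zero_add] at this
  have hbval : b = qk k (emb1 (nfg b)) := by
    have := nf_eq b
    rwa [hncb, hnfb, emb0_zero, map_zero, add_zero, zero_add] at this
  refine ⟨(nff a, nfg b), ⟨nff_const a, nfg_const b, haval, hbval⟩, ?_⟩
  rintro ⟨F, G⟩ ⟨hF, hG, hFa, hGb⟩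
  have h1 : a = qk k (MvPowerSeries.C (σ := Fin 2) (R := k) 0 + emb0 F + emb1 0) := by
    rw [hFa, emb1_zero, map_zero, add_zero, zero_add]
  have h2 : b = qk k (MvPowerSeries.C (σ := Fin 2) (R := k) 0 + emb0 0 + emb1 G) := by
    rw [hGb, emb0_zero, map_zero, add_zero, zero_add]
  have e1 := (nf_parts hF (map_zero _) h1).2.1
  have e2 := (nf_parts (map_zero _) hG h2).2.2
  exact Prod.ext e1.symm e2.symm

end Stmt10

/-- `Der_k(k[[x,y]]/(xy)) ≅ x·k[[x]]·∂x ⊕ y·k[[y]]·∂y`:  every `k`-derivation `D` of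
`R = k[[x,y]]/(xy)` satisfies `D(x̄) = f(x̄)`, `D(ȳ) = g(ȳ)` for unique `f ∈ x·k[[x]]`,
`g ∈ y·k[[y]]`; and conversely any such pair `(f, g)` arises from a unique `k`-derivation
of `R`. -/
theorem stmt10 {k : Type*} [Field k] :
    (∀ D : Derivation k (Node k) (Node k),
      ∃! FG : PowerSeries k × PowerSeries k,
        PowerSeries.constantCoeff FG.1 = 0 ∧ PowerSeries.constantCoeff FG.2 = 0 ∧
        D (nodeX k) = Ideal.Quotient.mk _ (emb0 FG.1) ∧
        D (nodeY k) = Ideal.Quotient.mk _ (emb1 FG.2)) ∧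
    (∀ f g : PowerSeries k,
      PowerSeries.constantCoeff f = 0 → PowerSeries.constantCoeff g = 0 →
      ∃! D : Derivation k (Node k) (Node k),
        D (nodeX k) = Ideal.Quotient.mk _ (emb0 f) ∧
        D (nodeY k) = Ideal.Quotient.mk _ (emb1 g)) := by
  constructor
  · intro D
    exact Stmt10.part1 D
  · intro f g hf hg
    refine ⟨Stmt10.Dder f g hf hg, ⟨Stmt10.Dder_X f g hf hg, Stmt10.Dder_Y f g hf hg⟩, ?_⟩
    intro D' hD'
    exact Stmt10.derivation_unique D' (Stmt10.Dder f g hf hg)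
      (by rw [hD'.1, Stmt10.Dder_X]) (by rw [hD'.2, Stmt10.Dder_Y])
end

section
/- Let k be a field of characteristic p > 0, let m be a positive integer prime to p with p | m + 1, and let σ be the k-algebra automorphism of k[[x]] of order p determined by σ(x)^m·(1 + x^m) = x^m and σ(x) ≡ x (mod x² k[[x]]). Set c := (m+1)/p, let g ∈ k[[x]] be the unique power series with g(0) = 1 and g^m = (1 − x^{m(p−1)})^c, and put f := g − 1 ∈ x·k[[x]]. Then for every integer i one has f·∂x − σ^i·(f·∂x) = −(∂x − σ^i·∂x) in Der_k(k[[x]]); in particular, the 1-cocycle φ_x : σ^i ↦ ∂x − σ^i·∂x is a coboundary with values in x·k[[x]]·∂x, hence its class in H¹(⟨σ⟩, x·k[[x]]·∂x) is zero. -/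
open PowerSeries

private lemma aux_deriv_zero {k : Type*} [CommRing k]
    (W : PowerSeries k → PowerSeries k)
    (hadd : ∀ a b, W (a + b) = W a + W b)
    (hmul : ∀ a b, W (a * b) = a * W b + b * W a)
    (hC : ∀ c : k, W (PowerSeries.C c) = 0)
    (hX : W PowerSeries.X = 0) (a : PowerSeries k) : W a = 0 := by
  have hone : W 1 = 0 := by
    have h := hmul 1 1
    simp only [one_mul] at h
    exact left_eq_add.mp h
  have hpow : ∀ n : ℕ, W ((X : PowerSeries k) ^ n) = 0 := by
    intro n
    induction n with
    | zero => simpa using hone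
    | succ n ih => rw [pow_succ, hmul, hX, ih]; simp
  have hmon : ∀ (n : ℕ) (c : k),
      ((PowerSeries.monomial n) c : PowerSeries k) = PowerSeries.C c * X ^ n := by
    intro n c
    ext j
    simp [PowerSeries.coeff_monomial, PowerSeries.coeff_C_mul, PowerSeries.coeff_X_pow]
  have hpoly : ∀ Q : Polynomial k, W (Q : PowerSeries k) = 0 := by
    intro Q
    induction Q using Polynomial.induction_on' with
    | add u v hu hv => rw [Polynomial.coe_add, hadd, hu, hv, add_zero]
    | monomial n c =>
        rw [Polynomial.coe_monomial, hmon, hmul, hC, hpow]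
        simp
  ext d
  have hdvd : (X : PowerSeries k) ^ (d + 1) ∣ a - (trunc (d + 1) a : PowerSeries k) := by
    rw [PowerSeries.X_pow_dvd_iff]
    intro i hi
    rw [map_sub, Polynomial.coeff_coe, coeff_trunc, if_pos hi, sub_self]
  obtain ⟨r, hr⟩ := hdvd
  have ha : a = (trunc (d + 1) a : PowerSeries k) + X ^ (d + 1) * r := by
    linear_combination hr
  rw [ha, hadd, hpoly, hmul, hpow, zero_add, mul_zero, add_zero]
  have : (X : PowerSeries k) ^ (d + 1) ∣ X ^ (d + 1) * W r := ⟨W r, rfl⟩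
  rw [PowerSeries.X_pow_dvd_iff] at this
  rw [this d (Nat.lt_succ_self d), map_zero]


private lemma aux_pow_inj {k : Type*} [Field k] (p m : ℕ) [Fact p.Prime] [CharP k p]
    (hmp : ¬ p ∣ m) (A B : PowerSeries k)
    (hA : constantCoeff A = 1) (hB : constantCoeff B = 1)
    (h : A ^ m = B ^ m) : A = B := by
  have hgeo := geom_sum₂_mul A B m
  rw [h, sub_self] at hgeo
  rcases mul_eq_zero.mp hgeo with h1 | h2
  · exfalso
    have hc : constantCoeff (∑ i ∈ Finset.range m, A ^ i * B ^ (m - 1 - i)) = (m : k) := by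
      rw [map_sum]
      have : ∀ i ∈ Finset.range m,
          constantCoeff (A ^ i * B ^ (m - 1 - i)) = 1 := by
        intro i _
        rw [map_mul, map_pow, map_pow, hA, hB, one_pow, one_pow, one_mul]
      rw [Finset.sum_congr rfl this]
      simp
    rw [h1, map_zero] at hc
    exact (fun hh => hmp ((CharP.cast_eq_zero_iff k p m).mp hh)) hc.symm
  · exact sub_eq_zero.mp h2


private lemma aux_key {k : Type*} [Field k] (p : ℕ) [Fact p.Prime] [CharP k p]
    (m : ℕ) (hm : 0 < m) (hmp : ¬ p ∣ m) (hdvd : p ∣ m + 1)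
    (σ : PowerSeries k ≃ₐ[k] PowerSeries k) (hord : orderOf σ = p)
    (hσ : (σ X) ^ m * (1 + X ^ m) = X ^ m) (hσ2 : X ^ 2 ∣ (σ X - X))
    (g : PowerSeries k) (hg1 : constantCoeff g = 1)
    (hg : g ^ m = (1 - X ^ (m * (p - 1))) ^ ((m + 1) / p)) :
    g * derivativeFun (σ X) = σ g := by
  obtain ⟨M, rfl⟩ : ∃ M, m = M + 1 := ⟨m - 1, (Nat.succ_pred_eq_of_pos hm).symm⟩
  obtain ⟨P, rfl⟩ : ∃ P, p = P + 1 :=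
    ⟨p - 1, (Nat.succ_pred_eq_of_pos (Nat.Prime.pos Fact.out)).symm⟩
  simp only [Nat.add_sub_cancel] at hg
  have hX1 : derivativeFun (X : PowerSeries k) = 1 := derivative_X
  have hdpow : ∀ (u : PowerSeries k) (n : ℕ),
      derivativeFun (u ^ (n + 1)) = ((n : PowerSeries k) + 1) * u ^ n * derivativeFun u := by
    intro u n
    induction n with
    | zero => simp
    | succ n ih =>
        rw [pow_succ, derivativeFun_mul, smul_eq_mul, smul_eq_mul, ih]
        push_cast
        ring
  have hcharPS : CharP (PowerSeries k) (P + 1) := by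
    have hinj : Function.Injective (C (R := k)) := by
      intro a b h
      simpa using congrArg constantCoeff h
    exact charP_of_injective_ringHom hinj (P + 1)
  have hmK : ((M + 1 : ℕ) : PowerSeries k) ≠ 0 := by
    intro h
    have h2 : ((M + 1 : ℕ) : k) = 0 := by
      have := congrArg constantCoeff h
      simpa using this
    exact hmp ((CharP.cast_eq_zero_iff k (P + 1) (M + 1)).mp h2)
  have hXne : (X : PowerSeries k) ≠ 0 := X_ne_zero
  obtain ⟨S, hSdef⟩ : ∃ S, σ X = S := ⟨σ X, rfl⟩
  rw [hSdef] at hσ hσ2 ⊢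
  obtain ⟨dS, hdSdef⟩ : ∃ d, derivativeFun S = d := ⟨_, rfl⟩
  rw [hdSdef]
  have hSne : S ≠ 0 := by
    intro h
    apply hXne
    have h2 := congrArg σ.symm (hSdef.trans h)
    rw [σ.symm_apply_apply, map_zero] at h2
    exact h2
  have hAne : (1 + X ^ (M + 1) : PowerSeries k) ≠ 0 := by
    intro h
    have := congrArg constantCoeff h
    simp at this
  -- derivative of the defining equation
  have e2 : ((M + 1 : ℕ) : PowerSeries k) *
      (S ^ (M + 1) * X ^ M + (1 + X ^ (M + 1)) * (S ^ M * dS)) =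
      ((M + 1 : ℕ) : PowerSeries k) * X ^ M := by
    have e1 := congrArg derivativeFun hσ
    rw [derivativeFun_mul, smul_eq_mul, smul_eq_mul, hdpow S M, derivativeFun_add,
      derivativeFun_one, hdpow X M, hX1, hdSdef, zero_add] at e1
    push_cast
    linear_combination e1
  have e3 : S ^ (M + 1) * X ^ M + (1 + X ^ (M + 1)) * (S ^ M * dS) = X ^ M :=
    mul_left_cancel₀ hmK e2
  have e4 : (1 + X ^ (M + 1) : PowerSeries k) ^ 2 * (S ^ M * dS) = X ^ M := by
    linear_combination (1 + X ^ (M + 1) : PowerSeries k) * e3 - (X : PowerSeries k) ^ M * hσ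
  have e5 : (S ^ (M + 1)) ^ M * (1 + X ^ (M + 1) : PowerSeries k) ^ M =
      ((X : PowerSeries k) ^ (M + 1)) ^ M := by
    rw [← mul_pow, hσ]
  have e4p : (1 + X ^ (M + 1) : PowerSeries k) ^ M * (1 + X ^ (M + 1)) ^ (M + 2) *
      ((S ^ (M + 1)) ^ M * dS ^ (M + 1)) = ((X : PowerSeries k) ^ (M + 1)) ^ M := by
    have h1 : ((1 + X ^ (M + 1) : PowerSeries k) ^ 2) ^ (M + 1) *
        ((S ^ M) ^ (M + 1) * dS ^ (M + 1)) = ((X : PowerSeries k) ^ M) ^ (M + 1) := by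
      rw [← mul_pow, ← mul_pow, e4]
    rw [← pow_mul, ← pow_mul, ← pow_mul] at h1
    rw [← pow_add, ← pow_mul, ← pow_mul]
    calc (1 + X ^ (M + 1) : PowerSeries k) ^ (M + (M + 2)) * (S ^ ((M + 1) * M) * dS ^ (M + 1))
        = (1 + X ^ (M + 1) : PowerSeries k) ^ (2 * (M + 1)) *
            (S ^ (M * (M + 1)) * dS ^ (M + 1)) := by
          congr 2 <;> ring
      _ = (X : PowerSeries k) ^ (M * (M + 1)) := h1
      _ = (X : PowerSeries k) ^ ((M + 1) * M) := by rw [Nat.mul_comm]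
  have e6 : dS ^ (M + 1) * (1 + X ^ (M + 1) : PowerSeries k) ^ (M + 2) = 1 := by
    have hc : (S ^ (M + 1)) ^ M * (1 + X ^ (M + 1) : PowerSeries k) ^ M ≠ 0 :=
      mul_ne_zero (pow_ne_zero _ (pow_ne_zero _ hSne)) (pow_ne_zero _ hAne)
    apply mul_left_cancel₀ hc
    linear_combination e4p - e5
  -- characteristic p computation
  have hApow : (1 + X ^ (M + 1) : PowerSeries k) ^ (P + 1) =
      1 + X ^ ((M + 1) * (P + 1)) := by
    rw [add_pow_char, one_pow, ← pow_mul]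
  have e5p : (S ^ (M + 1)) ^ P * (1 + X ^ (M + 1) : PowerSeries k) ^ P =
      ((X : PowerSeries k) ^ (M + 1)) ^ P := by rw [← mul_pow, hσ]
  have e7 : (1 - S ^ ((M + 1) * P)) * (1 + X ^ (M + 1) : PowerSeries k) ^ (P + 1) =
      1 - X ^ ((M + 1) * P) := by
    have h1 : S ^ ((M + 1) * P) * (1 + X ^ (M + 1) : PowerSeries k) ^ P =
        X ^ ((M + 1) * P) := by
      rw [pow_mul, pow_mul]; exact e5p
    have hx : (X : PowerSeries k) ^ ((M + 1) * P) * X ^ (M + 1) =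
        X ^ ((M + 1) * (P + 1)) := by
      rw [← pow_add, Nat.mul_succ]
    calc (1 - S ^ ((M + 1) * P)) * (1 + X ^ (M + 1) : PowerSeries k) ^ (P + 1)
        = (1 + X ^ (M + 1)) ^ (P + 1) -
            (S ^ ((M + 1) * P) * (1 + X ^ (M + 1)) ^ P) * (1 + X ^ (M + 1)) := by ring
      _ = (1 + X ^ ((M + 1) * (P + 1))) - X ^ ((M + 1) * P) * (1 + X ^ (M + 1)) := by
          rw [h1, hApow]
      _ = 1 - X ^ ((M + 1) * P) := by linear_combination -hx
  have hc : (P + 1) * ((M + 1 + 1) / (P + 1)) = M + 2 := Nat.mul_div_cancel' hdvd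
  have e8 : (1 - S ^ ((M + 1) * P)) ^ ((M + 1 + 1) / (P + 1)) *
      (1 + X ^ (M + 1) : PowerSeries k) ^ (M + 2) =
      (1 - X ^ ((M + 1) * P)) ^ ((M + 1 + 1) / (P + 1)) := by
    have e8' : ((1 - S ^ ((M + 1) * P)) *
        (1 + X ^ (M + 1) : PowerSeries k) ^ (P + 1)) ^ ((M + 1 + 1) / (P + 1)) =
        (1 - X ^ ((M + 1) * P)) ^ ((M + 1 + 1) / (P + 1)) := by rw [e7]
    rwa [mul_pow, ← pow_mul, hc] at e8'
  have hGm : (σ g) ^ (M + 1) * (1 + X ^ (M + 1) : PowerSeries k) ^ (M + 2) = g ^ (M + 1) := by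
    have hσg : (σ g) ^ (M + 1) = (1 - S ^ ((M + 1) * P)) ^ ((M + 1 + 1) / (P + 1)) := by
      rw [← map_pow, hg, map_pow, map_sub, map_one, map_pow, ← hSdef]
    rw [hσg, e8, ← hg]
  have hTm : (g * dS) ^ (M + 1) * (1 + X ^ (M + 1) : PowerSeries k) ^ (M + 2) = g ^ (M + 1) := by
    rw [mul_pow]
    linear_combination g ^ (M + 1) * e6
  have hTG : (g * dS) ^ (M + 1) = (σ g) ^ (M + 1) :=
    mul_right_cancel₀ (pow_ne_zero _ hAne) (hTm.trans hGm.symm)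
  -- constant coefficients
  obtain ⟨t, ht⟩ := hσ2
  have hSX : S = X + X ^ 2 * t := by linear_combination ht
  have hS0 : constantCoeff S = 0 := by
    rw [hSX]
    simp [constantCoeff_X]
  have hS1 : coeff 1 S = 1 := by
    have h2 : coeff 1 ((X : PowerSeries k) ^ 2 * t) = 0 :=
      (X_pow_dvd_iff.mp ⟨t, rfl⟩) 1 one_lt_two
    rw [hSX, map_add, h2, add_zero, coeff_one_X]
  have hdS0 : constantCoeff dS = 1 := by
    rw [← coeff_zero_eq_constantCoeff_apply, ← hdSdef, show derivativeFun S = derivative k S from rfl, coeff_derivative, hS1]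
    norm_num
  have hT0 : constantCoeff (g * dS) = 1 := by rw [map_mul, hg1, hdS0, one_mul]
  have hf0 : constantCoeff (g - 1) = 0 := by rw [map_sub, hg1, map_one, sub_self]
  obtain ⟨r0, hr0⟩ := X_dvd_iff.mpr hf0
  have hgX : g = 1 + X * r0 := by linear_combination hr0
  have hG0 : constantCoeff (σ g) = 1 := by
    rw [hgX, map_add, map_one, map_mul, hSdef, map_add, map_one, map_mul, hS0, zero_mul,
      add_zero]
  exact aux_pow_inj (P + 1) (M + 1) hmp _ _ hT0 hG0 hTG

/-- Let `k` have characteristic `p`, `m` a positive integer prime to `p` with `p ∣ m + 1`,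
and `σ` the order-`p` automorphism of `k[[x]]` with `σ(x)^m (1 + x^m) = x^m`,
`σ(x) ≡ x (mod x²)`.  Put `c := (m+1)/p`, let `g` be the unique series with `g(0) = 1`
and `g^m = (1 - x^{m(p-1)})^c`, and `f := g - 1 ∈ x·k[[x]]`.  Then
`f·∂x - σⁱ·(f·∂x) = -(∂x - σⁱ·∂x)` for every integer `i`; in particular the cocycle
`φ_x : σⁱ ↦ ∂x - σⁱ·∂x` is a coboundary with values in `x·k[[x]]·∂x`, hence has zero
class in `H¹(⟨σ⟩, x·k[[x]]·∂x)`. -/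
theorem stmt12 {k : Type*} [Field k] (p : ℕ) [Fact p.Prime] [CharP k p]
    (m : ℕ) (hm : 0 < m) (hmp : ¬ p ∣ m) (hdvd : p ∣ m + 1)
    (σ : PowerSeries k ≃ₐ[k] PowerSeries k) (hord : orderOf σ = p)
    (hσ : (σ X) ^ m * (1 + X ^ m) = X ^ m) (hσ2 : X ^ 2 ∣ (σ X - X))
    (g : PowerSeries k) (hg1 : constantCoeff g = 1)
    (hg : g ^ m = (1 - X ^ (m * (p - 1))) ^ ((m + 1) / p))
    (f : PowerSeries k) (hf : f = g - 1) :
    (∀ (i : ℤ) (a : PowerSeries k),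
        f * derivativeFun a - (σ ^ i) (f * derivativeFun ((σ ^ i)⁻¹ a)) =
          -(derivativeFun a - (σ ^ i) (derivativeFun ((σ ^ i)⁻¹ a)))) ∧
    (∃ f₀ : PowerSeries k, constantCoeff f₀ = 0 ∧
        ∀ (i : ℤ) (a : PowerSeries k),
          derivativeFun a - (σ ^ i) (derivativeFun ((σ ^ i)⁻¹ a)) =
            f₀ * derivativeFun a - (σ ^ i) (f₀ * derivativeFun ((σ ^ i)⁻¹ a))) := by
  have key : g * derivativeFun (σ X) = σ g :=
    aux_key p m hm hmp hdvd σ hord hσ hσ2 g hg1 hg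
  have hX1 : derivativeFun (X : PowerSeries k) = 1 := derivative_X
  have hWzero : ∀ a : PowerSeries k,
      σ.symm (g * derivativeFun (σ a)) - g * derivativeFun a = 0 := by
    apply aux_deriv_zero
    · intro a b
      simp only [map_add, derivativeFun_add, mul_add]
      ring
    · intro a b
      simp only [map_mul, derivativeFun_mul, smul_eq_mul, mul_add, map_add,
        AlgEquiv.symm_apply_apply]
      ring
    · intro c
      have hσC : σ (C c) = C c := by
        have h1 : (C c : PowerSeries k) = algebraMap k (PowerSeries k) c := by
          simp [PowerSeries.algebraMap_apply]
        rw [h1, σ.commutes]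
      rw [hσC, show derivativeFun (C c) = derivative k (C c) from rfl, derivative_C]
      simp
    · show σ.symm (g * derivativeFun (σ X)) - g * derivativeFun X = 0
      rw [key, σ.symm_apply_apply, hX1, mul_one, sub_self]
  have hcomm : ∀ a : PowerSeries k,
      σ (g * derivativeFun a) = g * derivativeFun (σ a) := by
    intro a
    have h := sub_eq_zero.mp (hWzero a)
    calc σ (g * derivativeFun a) = σ (σ.symm (g * derivativeFun (σ a))) := by rw [h]
      _ = g * derivativeFun (σ a) := σ.apply_symm_apply _
  have hcomm' : ∀ a : PowerSeries k,
      σ.symm (g * derivativeFun a) = g * derivativeFun (σ.symm a) := by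
    intro a
    have h := hcomm (σ.symm a)
    rw [σ.apply_symm_apply] at h
    rw [← h, σ.symm_apply_apply]
  have hinv : ∀ (τ : PowerSeries k ≃ₐ[k] PowerSeries k) (x : PowerSeries k),
      τ⁻¹ x = τ.symm x := fun _ _ => rfl
  have hz : ∀ (i : ℤ) (a : PowerSeries k),
      (σ ^ i) (g * derivativeFun a) = g * derivativeFun ((σ ^ i) a) := by
    intro i
    induction i using Int.induction_on with
    | zero => intro a; simp
    | succ i ih =>
        intro a
        rw [show σ ^ ((i : ℤ) + 1) = σ ^ (i : ℤ) * σ from zpow_add_one σ i,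
          AlgEquiv.mul_apply, AlgEquiv.mul_apply, hcomm, ih]
    | pred i ih =>
        intro a
        rw [show σ ^ (-(i : ℤ) - 1) = σ ^ (-(i : ℤ)) * σ⁻¹ from zpow_sub_one σ (-i),
          AlgEquiv.mul_apply, AlgEquiv.mul_apply, hinv, hcomm', ih, hinv]
  have hzinv : ∀ (i : ℤ) (a : PowerSeries k),
      (σ ^ i) (g * derivativeFun ((σ ^ i)⁻¹ a)) = g * derivativeFun a := by
    intro i a
    rw [hz i ((σ ^ i)⁻¹ a), hinv, AlgEquiv.apply_symm_apply]
  constructor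
  · intro i a
    have h1 := hzinv i a
    have h2 : (σ ^ i) ((g - 1) * derivativeFun ((σ ^ i)⁻¹ a)) =
        g * derivativeFun a - (σ ^ i) (derivativeFun ((σ ^ i)⁻¹ a)) := by
      rw [sub_mul, one_mul, map_sub, h1]
    rw [hf, h2]
    ring
  · refine ⟨1 - g, ?_, ?_⟩
    · rw [map_sub, map_one, hg1, sub_self]
    · intro i a
      have h1 := hzinv i a
      have h2 : (σ ^ i) ((1 - g) * derivativeFun ((σ ^ i)⁻¹ a)) =
          (σ ^ i) (derivativeFun ((σ ^ i)⁻¹ a)) - g * derivativeFun a := by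
        rw [sub_mul, one_mul, map_sub, h1]
      rw [h2]
      ring
end
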